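/- arXiv:2209.02670 — 10 statements merged into one kernel-verified Lean document; each statement's English description precedes it below -/
import Mathlib

section
/- Let G be a finite simple graph and α : E(G) → {0,1} an edge labelling. Define v ∼_α w iff there is a walk from v to w in G all of whose edges e satisfy α(e) = 1 (in particular v ∼_α v); this is an equivalence relation. Then α is realizable (i.e., α is the equality labelling of some vertex labelling) if and only if for every edge {v,w} ∈ E(G), v ∼_α w implies α({v,w}) = 1. -/
open SimpleGraph

variable {V : Type*}

/-- The element of `G.edgeSet` corresponding to an adjacent pair of vertices. -/
def edgeMk (G : SimpleGraph V) {v w : V} (h : G.Adj v w) : G.edgeSet :=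
  ⟨s(v, w), (SimpleGraph.mem_edgeSet G).mpr h⟩

/-- `α` is the equality labelling of the vertex labelling `lam` (label 1 ↔ `True`). -/
def IsEqualityLabelling (G : SimpleGraph V) {Λ : Type*} (lam : V → Λ)
    (α : G.edgeSet → Prop) : Prop :=
  ∀ v w (h : G.Adj v w), (α (edgeMk G h) ↔ lam v = lam w)

/-- An edge `{0,1}`-labelling is realizable (classical) if it is the equality labelling
of some vertex labelling into some set `Λ`. -/
def Realizable (G : SimpleGraph V) (α : G.edgeSet → Prop) : Prop :=
  ∃ (Λ : Type) (lam : V → Λ), IsEqualityLabelling G lam α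

/-- One step along an edge labelled `1` by `α`. -/
def stepRel (G : SimpleGraph V) (α : G.edgeSet → Prop) (v w : V) : Prop :=
  ∃ h : G.Adj v w, α (edgeMk G h)

lemma stepRel_symm (G : SimpleGraph V) (α : G.edgeSet → Prop) {v w : V}
    (h : stepRel G α v w) : stepRel G α w v := by
  obtain ⟨h, ha⟩ := h
  refine ⟨h.symm, ?_⟩
  have : edgeMk G h.symm = edgeMk G h := by
    simp [edgeMk, Sym2.eq_swap]
  rw [this]; exact ha

/-- `v ∼_α w` iff there is a walk from `v` to `w` all of whose edges are labelled `1`: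
this is an equivalence relation, and `α` is realizable iff for every edge `{v,w}`,
`v ∼_α w` implies `α({v,w}) = 1`. -/
theorem stmt0 [Fintype V] (G : SimpleGraph V) (α : G.edgeSet → Prop) :
    Equivalence (Relation.ReflTransGen (stepRel G α)) ∧
    (Realizable G α ↔
      ∀ v w (h : G.Adj v w),
        Relation.ReflTransGen (stepRel G α) v w → α (edgeMk G h)) := by
  classical
  have hsymm : ∀ {v w}, Relation.ReflTransGen (stepRel G α) v w →
      Relation.ReflTransGen (stepRel G α) w v := by
    intro v w h
    induction h with
    | refl => exact Relation.ReflTransGen.refl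
    | tail _ hstep ih =>
        exact Relation.ReflTransGen.head (stepRel_symm G α hstep) ih
  have hequiv : Equivalence (Relation.ReflTransGen (stepRel G α)) :=
    ⟨fun _ => Relation.ReflTransGen.refl, hsymm, fun h₁ h₂ => h₁.trans h₂⟩
  refine ⟨hequiv, ?_, ?_⟩
  · rintro ⟨Λ, lam, hlam⟩ v w h hvw
    have key : ∀ {a b}, Relation.ReflTransGen (stepRel G α) a b → lam a = lam b := by
      intro a b hab
      induction hab with
      | refl => rfl
      | tail _ hstep ih =>
          obtain ⟨hadj, ha⟩ := hstep
          exact ih.trans ((hlam _ _ hadj).mp ha)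
    exact (hlam v w h).mpr (key hvw)
  · intro hcond
    set s : Setoid V := ⟨Relation.ReflTransGen (stepRel G α), hequiv⟩ with hs
    letI : Fintype (Quotient s) := Quotient.fintype s
    refine ⟨Fin (Fintype.card (Quotient s)),
      fun v => Fintype.equivFin (Quotient s) (Quotient.mk s v), ?_⟩
    intro v w h
    constructor
    · intro ha
      have : Quotient.mk s v = Quotient.mk s w :=
        Quotient.sound (Relation.ReflTransGen.single ⟨h, ha⟩)
      exact congrArg _ this
    · intro heq
      have : Quotient.mk s v = Quotient.mk s w :=
        (Fintype.equivFin (Quotient s)).injective heq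
      exact hcond v w h (Quotient.exact this)
end

section
/- Let G be a finite simple graph, α : E(G) → {0,1} an edge labelling, and Λ any set. Let ∼_α be the equivalence relation on V(G) where v ∼_α w iff there is a walk from v to w all of whose edges have α-label 1, and let Q = V(G)/∼_α be the quotient set. Define a relation R on Q by: [v] R [w] iff there exist v' ∈ [v] and w' ∈ [w] with {v',w'} ∈ E(G) and α({v',w'}) = 0. Then the vertex labellings λ : V(G) → Λ with ε_λ = α are in bijective correspondence with the functions κ : Q → Λ such that A R B implies κ(A) ≠ κ(B). -/
open SimpleGraph

variable {V : Type*}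

/-- `v ∼_α w`: there is a walk from `v` to `w` all of whose edges are labelled 1. -/
def simRel (G : SimpleGraph V) (α : G.edgeSet → Prop) : V → V → Prop :=
  Relation.ReflTransGen (stepRel G α)

/-- The relation `R` on the quotient `Q = V/∼_α`: `[v] R [w]` iff there are representatives
`v' ∈ [v]`, `w' ∈ [w]` with `{v',w'} ∈ E(G)` and `α({v',w'}) = 0`. -/
def quotRel (G : SimpleGraph V) (α : G.edgeSet → Prop) :
    Quot (simRel G α) → Quot (simRel G α) → Prop := fun A B =>
  ∃ v w : V, Quot.mk (simRel G α) v = A ∧ Quot.mk (simRel G α) w = B ∧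
    ∃ h : G.Adj v w, ¬ α (edgeMk G h)

/-- The vertex labellings `lam : V → Λ` with `ε_lam = α` are in bijective correspondence
(via `lam = κ ∘ [·]`) with the functions `κ : Q → Λ` such that `A R B → κ A ≠ κ B`. -/
theorem stmt1 [Fintype V] (G : SimpleGraph V) (α : G.edgeSet → Prop) (Λ : Type*) :
    ∃ e : {lam : V → Λ // IsEqualityLabelling G lam α} ≃
        {κ : Quot (simRel G α) → Λ // ∀ A B, quotRel G α A B → κ A ≠ κ B},
      ∀ (lam : {lam : V → Λ // IsEqualityLabelling G lam α}) (v : V),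
        (e lam).1 (Quot.mk (simRel G α) v) = lam.1 v := by
  classical
  have const : ∀ (lam : V → Λ), IsEqualityLabelling G lam α →
      ∀ a b, simRel G α a b → lam a = lam b := by
    intro lam hlam a b h
    induction h with
    | refl => rfl
    | tail _ hstep ih =>
      obtain ⟨hadj, hα⟩ := hstep
      exact ih.trans ((hlam _ _ hadj).mp hα)
  refine ⟨{
    toFun := fun lam => ⟨Quot.lift lam.1 (const lam.1 lam.2), ?_⟩
    invFun := fun κ => ⟨fun v => κ.1 (Quot.mk _ v), ?_⟩
    left_inv := ?_
    right_inv := ?_ }, ?_⟩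
  · rintro A B ⟨v, w, rfl, rfl, hadj, hα⟩
    simpa using fun h => hα ((lam.2 v w hadj).mpr h)
  · intro v w hadj
    constructor
    · intro hα
      have : Quot.mk (simRel G α) v = Quot.mk (simRel G α) w :=
        Quot.sound (Relation.ReflTransGen.single ⟨hadj, hα⟩)
      simp [this]
    · intro hκ
      by_contra hα
      exact κ.2 _ _ ⟨v, w, rfl, rfl, hadj, hα⟩ hκ
  · intro lam; rfl
  · intro κ
    ext A
    induction A using Quot.ind
    rfl
  · intro lam v; rfl
end

section
/- Let G be a finite simple graph and V₁, V₂ ⊆ V(G) with V₁ ∪ V₂ = V(G) and V₁ ∩ V₂ = {v} a single vertex, such that every edge of G has both endpoints in V₁ or both in V₂ (i.e., G is the gluing of the induced subgraphs G₁ on V₁ and G₂ on V₂ along the vertex v). Then an edge weighting r ∈ [0,1]^{E(G)} lies in the classical polytope C_G if and only if its restriction to E(G₁) lies in C_{G₁} and its restriction to E(G₂) lies in C_{G₂}; that is, C_G = C_{G₁} × C_{G₂} under the identification E(G) = E(G₁) ⊔ E(G₂). -/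
open SimpleGraph
open scoped Classical

variable {V : Type*}

/-- `r` is a realizable edge `{0,1}`-labelling of `G`, viewed as a real vector:
it is the equality labelling of some vertex labelling. -/
def RealizablePoint (G : SimpleGraph V) (r : G.edgeSet → ℝ) : Prop :=
  ∃ (Λ : Type) (lam : V → Λ), ∀ v w (h : G.Adj v w),
    r (edgeMk G h) = if lam v = lam w then 1 else 0

/-- The classical polytope `C_G`: the convex hull of the realizable edge `{0,1}`-labellings. -/
def classicalPolytope (G : SimpleGraph V) : Set (G.edgeSet → ℝ) :=
  convexHull ℝ {r | RealizablePoint G r}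

/-- The (induced) subgraph of `G` on a set `s` of vertices, kept on the same vertex type:
its edges are exactly the edges of `G` with both endpoints in `s`. -/
def restrictTo (G : SimpleGraph V) (s : Set V) : SimpleGraph V where
  Adj v w := G.Adj v w ∧ v ∈ s ∧ w ∈ s
  symm := ⟨fun v w ⟨h, hv, hw⟩ => ⟨h.symm, hw, hv⟩⟩
  loopless := ⟨fun v h => G.irrefl h.1⟩

theorem restrictTo_le (G : SimpleGraph V) (s : Set V) : restrictTo G s ≤ G := by
  intro v w h; exact h.1

/-- Restriction of an edge weighting along a subgraph inclusion. -/
def restrictWeights {G G' : SimpleGraph V} (h : G' ≤ G) (r : G.edgeSet → ℝ) :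
    G'.edgeSet → ℝ :=
  fun e => r ⟨e.1, SimpleGraph.edgeSet_subset_edgeSet.mpr h e.2⟩


-- AUX

def resLin {G G' : SimpleGraph V} (h : G' ≤ G) : (G.edgeSet → ℝ) →ₗ[ℝ] (G'.edgeSet → ℝ) where
  toFun := restrictWeights h
  map_add' _ _ := rfl
  map_smul' _ _ := rfl

lemma realizable_restrict {G G' : SimpleGraph V} (h : G' ≤ G) {r : G.edgeSet → ℝ}
    (hr : RealizablePoint G r) : RealizablePoint G' (restrictWeights h r) := by
  obtain ⟨Λ, lam, hlam⟩ := hr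
  exact ⟨Λ, lam, fun x y hxy => hlam x y (h hxy)⟩

noncomputable def combLin (G G₁ G₂ : SimpleGraph V) :
    ((G₁.edgeSet → ℝ) × (G₂.edgeSet → ℝ)) →ₗ[ℝ] (G.edgeSet → ℝ) where
  toFun p e := if h : e.1 ∈ G₁.edgeSet then p.1 ⟨e.1, h⟩
    else if h' : e.1 ∈ G₂.edgeSet then p.2 ⟨e.1, h'⟩ else 0
  map_add' p q := by funext e; dsimp; split_ifs <;> simp
  map_smul' c p := by funext e; dsimp; split_ifs <;> simp

lemma mem_restrict_edgeSet {G : SimpleGraph V} {s : Set V} {x y : V} :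
    s(x, y) ∈ (restrictTo G s).edgeSet ↔ G.Adj x y ∧ x ∈ s ∧ y ∈ s := by
  simp [restrictTo]

lemma iteCongrProp {P Q : Prop} [Decidable P] [Decidable Q] (h : P ↔ Q) :
    (if P then (1:ℝ) else 0) = if Q then 1 else 0 := by
  by_cases hp : P
  · rw [if_pos hp, if_pos (h.mp hp)]
  · rw [if_neg hp, if_neg (fun hq => hp (h.mpr hq))]

section glue
variable (G : SimpleGraph V) (V₁ V₂ : Set V) (v : V)

lemma combine_restrict
    (hedges : ∀ x y, G.Adj x y → (x ∈ V₁ ∧ y ∈ V₁) ∨ (x ∈ V₂ ∧ y ∈ V₂))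
    (r : G.edgeSet → ℝ) :
    combLin G (restrictTo G V₁) (restrictTo G V₂)
      (restrictWeights (restrictTo_le G V₁) r, restrictWeights (restrictTo_le G V₂) r) = r := by
  funext e
  obtain ⟨e, he⟩ := e
  induction e using Sym2.ind with
  | _ x y =>
    have hadj : G.Adj x y := he
    dsimp [combLin]
    split_ifs with h1 h2
    · rfl
    · rfl
    · exfalso
      rcases hedges x y hadj with ⟨hx, hy⟩ | ⟨hx, hy⟩
      · exact h1 (mem_restrict_edgeSet.mpr ⟨hadj, hx, hy⟩)
      · exact h2 (mem_restrict_edgeSet.mpr ⟨hadj, hx, hy⟩)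

lemma combine_realizable
    (hmeet : V₁ ∩ V₂ = {v})
    (hedges : ∀ x y, G.Adj x y → (x ∈ V₁ ∧ y ∈ V₁) ∨ (x ∈ V₂ ∧ y ∈ V₂))
    {p₁ : (restrictTo G V₁).edgeSet → ℝ} {p₂ : (restrictTo G V₂).edgeSet → ℝ}
    (h₁ : RealizablePoint (restrictTo G V₁) p₁) (h₂ : RealizablePoint (restrictTo G V₂) p₂) :
    RealizablePoint G (combLin G (restrictTo G V₁) (restrictTo G V₂) (p₁, p₂)) := by
  obtain ⟨Λ₁, lam₁, hlam₁⟩ := h₁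
  obtain ⟨Λ₂, lam₂, hlam₂⟩ := h₂
  have hv₁ : v ∈ V₁ := (hmeet ▸ (Set.mem_singleton v) : v ∈ V₁ ∩ V₂).1
  set ν : V → Λ₁ ⊕ Λ₂ := fun z =>
    if lam₂ z = lam₂ v then Sum.inl (lam₁ v) else Sum.inr (lam₂ z) with hνdef
  have hν : ∀ a b, ν a = ν b ↔ lam₂ a = lam₂ b := by
    intro a b
    by_cases ha : lam₂ a = lam₂ v <;> by_cases hb : lam₂ b = lam₂ v
    · simp only [hνdef, if_pos ha, if_pos hb]
      constructor
      · intro _; exact ha.trans hb.symm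
      · intro _; trivial
    · simp only [hνdef, if_pos ha, if_neg hb]
      constructor
      · intro h; exact absurd h (by simp)
      · intro h; exact absurd (h.symm.trans ha) hb
    · simp only [hνdef, if_neg ha, if_pos hb]
      constructor
      · intro h; exact absurd h (by simp)
      · intro h; exact absurd (h.trans hb) ha
    · simp only [hνdef, if_neg ha, if_neg hb, Sum.inr.injEq]
  set μ : V → Λ₁ ⊕ Λ₂ := fun z => if z ∈ V₁ then Sum.inl (lam₁ z) else ν z with hμdef
  have key : ∀ z, z ∈ V₂ → z ∉ V₁ ∨ z = v := by
    intro z hz2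
    by_cases hz1 : z ∈ V₁
    · right; have : z ∈ V₁ ∩ V₂ := ⟨hz1, hz2⟩; rwa [hmeet] at this
    · left; exact hz1
  have hμν : ∀ z, z ∈ V₂ → μ z = ν z := by
    intro z hz
    rcases key z hz with hz1 | rfl
    · simp [hμdef, hz1]
    · simp [hμdef, hνdef, hv₁]
  refine ⟨Λ₁ ⊕ Λ₂, μ, ?_⟩
  intro x y hadj
  have hun : (combLin G (restrictTo G V₁) (restrictTo G V₂) (p₁, p₂)) (edgeMk G hadj)
      = (if h : s(x,y) ∈ (restrictTo G V₁).edgeSet then p₁ ⟨s(x,y), h⟩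
        else if h' : s(x,y) ∈ (restrictTo G V₂).edgeSet then p₂ ⟨s(x,y), h'⟩ else 0) := rfl
  rw [hun]
  by_cases h1 : s(x,y) ∈ (restrictTo G V₁).edgeSet
  · rw [dif_pos h1]
    have hadj1 : (restrictTo G V₁).Adj x y := h1
    have hx : x ∈ V₁ := hadj1.2.1
    have hy : y ∈ V₁ := hadj1.2.2
    rw [show (⟨s(x,y), h1⟩ : (restrictTo G V₁).edgeSet) = edgeMk _ hadj1 from rfl,
      hlam₁ x y hadj1]
    have hiff : μ x = μ y ↔ lam₁ x = lam₁ y := by simp [hμdef, hx, hy]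
    by_cases hc : lam₁ x = lam₁ y
    · rw [if_pos hc, if_pos (hiff.mpr hc)]
    · rw [if_neg hc, if_neg (fun h => hc (hiff.mp h))]
  · rw [dif_neg h1]
    have h2 : s(x,y) ∈ (restrictTo G V₂).edgeSet := by
      rcases hedges x y hadj with ⟨hx, hy⟩ | ⟨hx, hy⟩
      · exact absurd (mem_restrict_edgeSet.mpr ⟨hadj, hx, hy⟩) h1
      · exact mem_restrict_edgeSet.mpr ⟨hadj, hx, hy⟩
    rw [dif_pos h2]
    have hadj2 : (restrictTo G V₂).Adj x y := h2
    have hx : x ∈ V₂ := hadj2.2.1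
    have hy : y ∈ V₂ := hadj2.2.2
    rw [show (⟨s(x,y), h2⟩ : (restrictTo G V₂).edgeSet) = edgeMk _ hadj2 from rfl,
      hlam₂ x y hadj2]
    have hiff : μ x = μ y ↔ lam₂ x = lam₂ y := by
      rw [hμν x hx, hμν y hy]; exact hν x y
    by_cases hc : lam₂ x = lam₂ y
    · rw [if_pos hc, if_pos (hiff.mpr hc)]
    · rw [if_neg hc, if_neg (fun h => hc (hiff.mp h))]
end glue

lemma restrict_mem_polytope {G G' : SimpleGraph V} (h : G' ≤ G) {r : G.edgeSet → ℝ}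
    (hr : r ∈ classicalPolytope G) :
    restrictWeights h r ∈ classicalPolytope G' := by
  have himg := (resLin h).image_convexHull {q | RealizablePoint G q}
  have hmem : restrictWeights h r ∈ resLin h '' convexHull ℝ {q | RealizablePoint G q} :=
    ⟨r, hr, rfl⟩
  rw [himg] at hmem
  refine convexHull_mono ?_ hmem
  rintro _ ⟨q, hq, rfl⟩
  exact realizable_restrict h hq

/-- If `G` is the gluing of its induced subgraphs `G₁` on `V₁` and `G₂` on `V₂` along a
single vertex `v` (i.e. `V₁ ∩ V₂ = {v}` and every edge lies within `V₁` or within `V₂`),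
then an edge weighting `r ∈ [0,1]^{E(G)}` lies in `C_G` iff its restriction to `E(G₁)`
lies in `C_{G₁}` and its restriction to `E(G₂)` lies in `C_{G₂}`. -/
theorem stmt5 [Fintype V] (G : SimpleGraph V) (V₁ V₂ : Set V) (v : V)
    (hcover : V₁ ∪ V₂ = Set.univ) (hmeet : V₁ ∩ V₂ = {v})
    (hedges : ∀ x y, G.Adj x y → (x ∈ V₁ ∧ y ∈ V₁) ∨ (x ∈ V₂ ∧ y ∈ V₂))
    (r : G.edgeSet → ℝ) (hr01 : ∀ e, r e ∈ Set.Icc (0 : ℝ) 1) :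
    r ∈ classicalPolytope G ↔
      (restrictWeights (restrictTo_le G V₁) r ∈ classicalPolytope (restrictTo G V₁) ∧
       restrictWeights (restrictTo_le G V₂) r ∈ classicalPolytope (restrictTo G V₂)) := by
  constructor
  · intro hmem
    exact ⟨restrict_mem_polytope _ hmem, restrict_mem_polytope _ hmem⟩
  · rintro ⟨m1, m2⟩
    have hp : (restrictWeights (restrictTo_le G V₁) r, restrictWeights (restrictTo_le G V₂) r)
        ∈ convexHull ℝ (({q | RealizablePoint (restrictTo G V₁) q}) ×ˢ
          ({q | RealizablePoint (restrictTo G V₂) q})) :=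
      mk_mem_convexHull_prod m1 m2
    have hmem : r ∈ combLin G (restrictTo G V₁) (restrictTo G V₂) ''
        convexHull ℝ (({q | RealizablePoint (restrictTo G V₁) q}) ×ˢ
          ({q | RealizablePoint (restrictTo G V₂) q})) := by
      refine ⟨_, hp, ?_⟩
      exact combine_restrict G V₁ V₂ hedges r
    rw [LinearMap.image_convexHull] at hmem
    refine convexHull_mono ?_ hmem
    rintro _ ⟨⟨q1, q2⟩, hq, rfl⟩
    exact combine_realizable G V₁ V₂ v hmeet hedges hq.1 hq.2
end

section
/- Let G be a finite connected simple graph with at least one vertex. Then the classical polytope C_G equals the full unit hypercube [0,1]^{E(G)} if and only if G is a tree (i.e., G is connected and acyclic). -/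
open SimpleGraph
open scoped Classical

variable {V : Type*}

lemma realizable_val {G : SimpleGraph V} {r : G.edgeSet → ℝ} (hr : RealizablePoint G r)
    (e : G.edgeSet) : r e = 0 ∨ r e = 1 := by
  obtain ⟨Λ, lam, hlam⟩ := hr
  obtain ⟨x, hx⟩ := e
  induction x using Sym2.ind with
  | _ a b =>
    have hab : G.Adj a b := hx
    have he : (⟨s(a, b), hx⟩ : G.edgeSet) = edgeMk G hab := rfl
    rw [he, hlam a b hab]
    split <;> simp

lemma lam_eq_of_walk {G : SimpleGraph V} {Λ : Type} {lam : V → Λ} {r : G.edgeSet → ℝ}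
    (hr : ∀ v w (h : G.Adj v w), r (edgeMk G h) = if lam v = lam w then 1 else 0)
    {a b : V} (q : G.Walk a b)
    (hq : ∀ (e : G.edgeSet), (e : Sym2 V) ∈ q.edges → r e = 1) : lam a = lam b := by
  induction q with
  | nil => rfl
  | @cons u c w h' q' ih =>
    have h1 : r (edgeMk G h') = 1 := by
      apply hq
      simp [edgeMk]
    rw [hr u c h'] at h1
    have huc : lam u = lam c := by
      by_contra hne
      rw [if_neg hne] at h1
      norm_num at h1
    rw [huc]
    exact ih fun e he => hq e (by simp [he])

lemma tree_realizable [Fintype V] {G : SimpleGraph V} (hT : G.IsTree)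
    (α : G.edgeSet → ℝ) (hα : ∀ e, α e = 0 ∨ α e = 1) : RealizablePoint G α := by
  set H : SimpleGraph V :=
    { Adj := fun a b => ∃ h : G.Adj a b, α (edgeMk G h) = 1
      symm := by
        constructor
        rintro a b ⟨h, h1⟩
        refine ⟨h.symm, ?_⟩
        have : edgeMk G h.symm = edgeMk G h := Subtype.ext (Sym2.eq_swap)
        rwa [this]
      loopless := ⟨fun a ha => G.loopless.irrefl a ha.choose⟩ } with hHdef
  have hle : ∀ a b, H.Adj a b → G.Adj a b := fun a b h => h.choose
  let fV := Fintype.equivFin V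
  refine ⟨Fin (Fintype.card V), fun v => fV (H.connectedComponentMk v).out, fun v w h => ?_⟩
  have key : ∀ v w : V,
      (fV (H.connectedComponentMk v).out = fV (H.connectedComponentMk w).out) ↔
        H.Reachable v w := by
    intro v w
    rw [fV.injective.eq_iff]
    constructor
    · intro hout
      have : H.connectedComponentMk v = H.connectedComponentMk w := by
        rw [← Quot.out_eq (H.connectedComponentMk v), ← Quot.out_eq (H.connectedComponentMk w),
          hout]
      exact ConnectedComponent.exact this
    · intro hreach
      rw [ConnectedComponent.sound hreach]
  rcases hα (edgeMk G h) with h0 | h1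
  · rw [h0, if_neg]
    rw [key]
    intro hreach
    obtain ⟨W⟩ := hreach
    -- map the H-walk to a G-walk
    have hle' : H ≤ G := hle
    have hpath : ((Walk.mapLe hle' W).toPath : G.Walk v w).IsPath := (Walk.mapLe hle' W).toPath.property
    have huniq := hT.existsUnique_path v w
    obtain ⟨p, hp, hup⟩ := huniq
    have h1path : (Walk.cons h Walk.nil : G.Walk v w).IsPath := by
      simp [Walk.isPath_def, h.ne]
    have e1 : ((W.mapLe hle').toPath : G.Walk v w) = p := hup _ hpath
    have e2 : (Walk.cons h Walk.nil : G.Walk v w) = p := hup _ h1path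
    have hmem : s(v, w) ∈ ((W.mapLe hle').toPath : G.Walk v w).edges := by
      rw [e1, ← e2]; simp
    have hmem2 : s(v, w) ∈ (W.mapLe hle').edges := Walk.edges_toPath_subset _ hmem
    have hmem3 : s(v, w) ∈ W.edges := by
      have : (W.mapLe hle').edges = W.edges := by
        rw [Walk.mapLe, Walk.edges_map]
        have hid : Sym2.map ⇑(Hom.ofLE hle') = id := by
          funext z
          induction z using Sym2.ind with
          | _ a b => rfl
        rw [hid, List.map_id]
      rwa [this] at hmem2
    have hadj : H.Adj v w := W.adj_of_mem_edges hmem3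
    obtain ⟨h', h1'⟩ := hadj
    have : edgeMk G h' = edgeMk G h := rfl
    rw [this, h0] at h1'
    norm_num at h1'
  · rw [h1, if_pos]
    rw [key]
    exact Adj.reachable ⟨h, h1⟩

/-- For a finite connected graph `G` (hence with at least one vertex), the classical
polytope `C_G` equals the full unit hypercube `[0,1]^{E(G)}` iff `G` is a tree. -/
theorem stmt7 [Fintype V] (G : SimpleGraph V) (hconn : G.Connected) :
    classicalPolytope G = {r : G.edgeSet → ℝ | ∀ e, r e ∈ Set.Icc (0 : ℝ) 1} ↔
      G.IsTree := by
  constructor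
  · -- polytope = cube → tree
    intro heq
    refine ⟨hconn, ?_⟩
    intro v p hp
    cases p with
    | nil => exact hp.ne_nil rfl
    | @cons _ x _ h q =>
      -- the first edge
      set e0 : G.edgeSet := edgeMk G h with he0
      set F : Finset G.edgeSet := Finset.univ.filter (fun e => (e : Sym2 V) ∈ q.edges) with hF
      have hnodup : (s(v, x) :: q.edges).Nodup := by
        have := hp.isTrail.edges_nodup
        simpa using this
      have he0F : e0 ∉ F := by
        simp only [hF, Finset.mem_filter, Finset.mem_univ, true_and]
        exact (List.nodup_cons.mp hnodup).1
      -- the bad point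
      set rstar : G.edgeSet → ℝ := fun e => if e = e0 then 0 else 1 with hrstar
      have hrcube : rstar ∈ {r : G.edgeSet → ℝ | ∀ e, r e ∈ Set.Icc (0 : ℝ) 1} := by
        intro e
        simp only [hrstar]
        split <;> norm_num
      rw [← heq] at hrcube
      -- halfspace
      have hlin : IsLinearMap ℝ (fun r : G.edgeSet → ℝ => r e0 - ∑ e ∈ F, r e) := by
        constructor
        · intro a b
          simp [Finset.sum_add_distrib]; ring
        · intro c a
          simp [Finset.mul_sum, mul_sub]
      have hconv : Convex ℝ {r : G.edgeSet → ℝ |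
          (1 : ℝ) - F.card ≤ r e0 - ∑ e ∈ F, r e} := convex_halfSpace_ge hlin _
      have hsub : {r | RealizablePoint G r} ⊆ {r : G.edgeSet → ℝ |
          (1 : ℝ) - F.card ≤ r e0 - ∑ e ∈ F, r e} := by
        intro r hr
        simp only [Set.mem_setOf_eq]
        by_cases hall : ∀ e ∈ F, r e = 1
        · -- all cycle edges equal 1, so endpoints of e0 have equal labels
          have hsum : ∑ e ∈ F, r e = F.card := by
            rw [Finset.sum_congr rfl hall]; simp
          obtain ⟨Λ, lam, hlam⟩ := hr
          have hxv : lam x = lam v := by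
            apply lam_eq_of_walk hlam q
            intro e he
            exact hall e (by simp [hF, he])
          have hre0 : r e0 = 1 := by
            rw [he0, hlam v x h, if_pos hxv.symm]
          rw [hre0, hsum]
        · push_neg at hall
          obtain ⟨e', he'F, he'⟩ := hall
          have he'0 : r e' = 0 := (realizable_val hr e').resolve_right he'
          have hb : ∑ e ∈ F, r e ≤ (F.card : ℝ) - 1 := by
            rw [← Finset.add_sum_erase _ _ he'F, he'0, zero_add]
            have hbnd : ∑ e ∈ F.erase e', r e ≤ (F.erase e').card • (1 : ℝ) :=
              Finset.sum_le_card_nsmul _ _ _ (fun e _ => by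
                rcases realizable_val hr e with h0 | h0 <;> simp [h0])
            rw [nsmul_eq_mul, mul_one] at hbnd
            calc ∑ e ∈ F.erase e', r e ≤ ((F.erase e').card : ℝ) := hbnd
              _ = (F.card : ℝ) - 1 := by
                  rw [Finset.card_erase_of_mem he'F]
                  have : 1 ≤ F.card := Finset.card_pos.mpr ⟨e', he'F⟩
                  push_cast [Nat.cast_sub this]
                  ring
          have hre0 : (0 : ℝ) ≤ r e0 := by
            rcases realizable_val hr e0 with h0 | h0 <;> simp [h0]
          linarith
      have := convexHull_min hsub hconv hrcube
      simp only [Set.mem_setOf_eq] at this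
      have hs0 : rstar e0 = 0 := by simp [hrstar]
      have hone : ∀ e ∈ F, rstar e = 1 := by
        intro e he
        simp only [hrstar]
        rw [if_neg]
        rintro rfl
        exact he0F he
      have hs1 : ∑ e ∈ F, rstar e = F.card := by
        rw [Finset.sum_congr rfl hone]
        simp
      rw [hs0, hs1] at this
      linarith
  · -- tree → polytope = cube
    intro hT
    apply Set.Subset.antisymm
    · apply convexHull_min
      · intro r hr e
        rcases realizable_val hr e with h0 | h0 <;> simp [h0]
      · have : {r : G.edgeSet → ℝ | ∀ e, r e ∈ Set.Icc (0 : ℝ) 1} =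
            Set.pi Set.univ (fun _ : G.edgeSet => Set.Icc (0 : ℝ) 1) := by
          ext r
          rw [Set.mem_setOf_eq, Set.mem_pi]
          exact ⟨fun h e _ => h e, fun h e => h e (Set.mem_univ e)⟩
        rw [this]
        exact convex_pi fun _ _ => convex_Icc 0 1
    · intro r hr
      have hcube : {r : G.edgeSet → ℝ | ∀ e, r e ∈ Set.Icc (0 : ℝ) 1} =
          convexHull ℝ {r : G.edgeSet → ℝ | ∀ e, r e = 0 ∨ r e = 1} := by
        have h1 : {r : G.edgeSet → ℝ | ∀ e, r e = 0 ∨ r e = 1} =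
            Set.pi Set.univ (fun _ : G.edgeSet => ({0, 1} : Set ℝ)) := by
          ext r
          rw [Set.mem_setOf_eq, Set.mem_pi]
          simp only [Set.mem_univ, forall_true_left, Set.mem_insert_iff,
            Set.mem_singleton_iff]
        have hIcc : convexHull ℝ ({0, 1} : Set ℝ) = Set.Icc 0 1 := by
          rw [convexHull_pair, segment_eq_Icc zero_le_one]
        rw [h1, convexHull_pi]
        ext r
        rw [Set.mem_setOf_eq, Set.mem_pi]
        simp [hIcc]
      rw [hcube] at hr
      refine convexHull_min ?_ (convex_convexHull ℝ _) hr
      intro α hα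
      exact subset_convexHull ℝ _ (tree_realizable hT α hα)
end

section
/- Fix n ≥ 2 and let K_n be the complete simple graph on {1, …, n}, with E_n partitioned as G_n = { {1,i} : i = 2, …, n } and R_n = E_n ∖ G_n; let h_n(r) = Σ_{e ∈ G_n} r_e − Σ_{e ∈ R_n} r_e. For each i = 2, …, n, let r^{(i)} ∈ {0,1}^{E_n} assign 1 to the edge {1,i} and 0 to all other edges; for each pair i < j in {2, …, n}, let r^{(i,j)} ∈ {0,1}^{E_n} assign 1 to exactly the three edges {1,i}, {1,j}, {i,j} and 0 to all others. Let F be the set of all these points. Then: (i) every element of F is a realizable edge {0,1}-labelling of K_n, hence a vertex of C_{K_n}; (ii) every element r of F satisfies h_n(r) = 1; (iii) F has exactly n(n−1)/2 elements; and (iv) the family F is affinely independent in ℝ^{E_n}. Consequently the valid inequality h_n(r) ≤ 1 defines a facet of the classical polytope C_{K_n}. -/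
open SimpleGraph
open scoped Classical

variable {V : Type*}

/-- The complete graph `K_n` on vertex set `{1, …, n}`, modelled as `Fin n`
(vertex `1` of the paper corresponds to `0 : Fin n`). -/
abbrev Kgraph (n : ℕ) : SimpleGraph (Fin n) := ⊤

/-- The functional `h_n(r) = Σ_{e ∈ G_n} r_e − Σ_{e ∈ R_n} r_e`, where `G_n` consists of
the edges containing the vertex `0` (the paper's vertex `1`) and `R_n` of all remaining
edges of `K_n`. -/
noncomputable def hFun (n : ℕ) [NeZero n] (r : (Kgraph n).edgeSet → ℝ) : ℝ :=
  ∑ e : (Kgraph n).edgeSet, (if (0 : Fin n) ∈ (e : Sym2 (Fin n)) then r e else - r e)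

/-- `r^{(i)}`: the edge labelling assigning `1` to the edge `{0,i}` and `0` elsewhere. -/
noncomputable def point1 (n : ℕ) [NeZero n] (i : Fin n) : (Kgraph n).edgeSet → ℝ :=
  fun e => if (e : Sym2 (Fin n)) = s((0 : Fin n), i) then 1 else 0

/-- `r^{(i,j)}`: the edge labelling assigning `1` to exactly the three edges
`{0,i}`, `{0,j}`, `{i,j}` and `0` elsewhere. -/
noncomputable def point2 (n : ℕ) [NeZero n] (i j : Fin n) : (Kgraph n).edgeSet → ℝ :=
  fun e => if ((e : Sym2 (Fin n)) = s((0 : Fin n), i) ∨ (e : Sym2 (Fin n)) = s((0 : Fin n), j) ∨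
      (e : Sym2 (Fin n)) = s(i, j)) then 1 else 0

/-- The set `F` of all the points `r^{(i)}` and `r^{(i,j)}`. -/
def Fset (n : ℕ) [NeZero n] : Set ((Kgraph n).edgeSet → ℝ) :=
  {p | ∃ i : Fin n, i ≠ 0 ∧ p = point1 n i} ∪
  {p | ∃ i j : Fin n, i ≠ 0 ∧ j ≠ 0 ∧ i ≠ j ∧ p = point2 n i j}

section helpers

variable (n : ℕ) [NeZero n]

omit [NeZero n] in
lemma mem_edgeSetK {a b : Fin n} : s(a,b) ∈ (Kgraph n).edgeSet ↔ a ≠ b := by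
  simp [SimpleGraph.mem_edgeSet]

omit [NeZero n] in
/-- sum over edges equals sum over sorted pairs -/
lemma sum_edges (f : (Kgraph n).edgeSet → ℝ) (F : Fin n × Fin n → ℝ)
    (hF : ∀ a b (h : a ≠ b), F (a, b) = f ⟨s(a,b), (mem_edgeSetK n).mpr h⟩) :
    ∑ p ∈ Finset.univ.filter (fun p : Fin n × Fin n => p.1 < p.2), F p
      = ∑ e : (Kgraph n).edgeSet, f e := by
  refine Finset.sum_bij (fun p hp => (⟨s(p.1, p.2),
    (mem_edgeSetK n).mpr (ne_of_lt (Finset.mem_filter.mp hp).2)⟩ : (Kgraph n).edgeSet))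
    (fun p hp => Finset.mem_univ _) ?_ ?_ ?_
  · intro p hp q hq h
    simp only [Subtype.mk.injEq, Sym2.eq_iff] at h
    have hp' := (Finset.mem_filter.mp hp).2
    have hq' := (Finset.mem_filter.mp hq).2
    rcases h with ⟨h1, h2⟩ | ⟨h1, h2⟩
    · exact Prod.ext h1 h2
    · exfalso; rw [h1, h2] at hp'; exact absurd (hp'.trans hq') (lt_irrefl _)
  · rintro ⟨e, he⟩ -
    induction e using Sym2.ind with
    | _ a b =>
      have hab : a ≠ b := (mem_edgeSetK n).mp he
      rcases lt_or_gt_of_ne hab with h | h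
      · exact ⟨(a, b), Finset.mem_filter.mpr ⟨Finset.mem_univ _, h⟩, rfl⟩
      · exact ⟨(b, a), Finset.mem_filter.mpr ⟨Finset.mem_univ _, h⟩, by
          simp [Sym2.eq_swap]⟩
  · intro p hp
    exact hF p.1 p.2 (ne_of_lt (Finset.mem_filter.mp hp).2)

end helpers
section helpers2

variable (n : ℕ) [NeZero n]

/-- sorted pairs -/
def Pn : Finset (Fin n × Fin n) := Finset.univ.filter (fun p => p.1 < p.2)

/-- extension of an edge-function to all of `Sym2` by zero -/
noncomputable def ext (r : (Kgraph n).edgeSet → ℝ) : Sym2 (Fin n) → ℝ :=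
  fun s => if h : s ∈ (Kgraph n).edgeSet then r ⟨s, h⟩ else 0

lemma ext_apply (r : (Kgraph n).edgeSet → ℝ) {a b : Fin n} (h : a ≠ b) :
    ext n r s(a,b) = r ⟨s(a,b), (mem_edgeSetK n).mpr h⟩ :=
  dif_pos _

lemma hFun_eq (r : (Kgraph n).edgeSet → ℝ) :
    hFun n r = ∑ p ∈ Pn n,
      (if p.1 = 0 ∨ p.2 = 0 then ext n r s(p.1, p.2) else - ext n r s(p.1, p.2)) := by
  rw [hFun, Pn]
  refine (sum_edges n _ _ ?_).symm
  intro a b h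
  rw [ext_apply n r h]
  congr 1
  simp [Sym2.mem_iff, eq_comm]

lemma ext_point1 (i : Fin n) {a b : Fin n} (h : a ≠ b) :
    ext n (point1 n i) s(a,b) = if s(a,b) = s((0:Fin n), i) then 1 else 0 := by
  rw [ext_apply n _ h]; rfl

lemma ext_point2 (i j : Fin n) {a b : Fin n} (h : a ≠ b) :
    ext n (point2 n i j) s(a,b) =
      if (s(a,b) = s((0:Fin n), i) ∨ s(a,b) = s((0:Fin n), j) ∨ s(a,b) = s(i, j))
      then 1 else 0 := by
  rw [ext_apply n _ h]; rfl

lemma point2_comm (i j : Fin n) : point2 n i j = point2 n j i := by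
  funext e; simp only [point2]; congr 1
  rw [Sym2.eq_swap (a := i)]; exact propext ⟨by tauto, by tauto⟩

lemma pos_of_ne_zero' {i : Fin n} (h : i ≠ 0) : (0 : Fin n) < i := by
  rw [Fin.lt_def, Fin.val_zero]
  exact Nat.pos_of_ne_zero (fun hv => h (Fin.ext (by simp [hv])))

lemma hFun_point1 {i : Fin n} (hi : i ≠ 0) : hFun n (point1 n i) = 1 := by
  have h0i : (0 : Fin n) < i := pos_of_ne_zero' n hi
  rw [hFun_eq]
  rw [Finset.sum_eq_single_of_mem ((0 : Fin n), i)
    (by simp [Pn, h0i])]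
  · rw [if_pos (Or.inl rfl), ext_point1 n i (ne_of_lt h0i), if_pos rfl]
  · rintro ⟨a, b⟩ hp hne
    have hab : a < b := (Finset.mem_filter.mp hp).2
    have hb0 : b ≠ 0 := fun hb => by simp [hb, Fin.lt_def] at hab
    have : s(a, b) ≠ s((0:Fin n), i) := by
      intro hc
      rw [Sym2.eq_iff] at hc
      rcases hc with ⟨rfl, rfl⟩ | ⟨rfl, rfl⟩
      · exact hne rfl
      · exact hb0 rfl
    rw [ext_point1 n i (ne_of_lt hab), if_neg this]
    split <;> simp

end helpers2
section helpers3
variable (n : ℕ) [NeZero n]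

lemma sorted_pair_eq {a b c d : Fin n} (hab : a < b) (hcd : c < d)
    (h : s(a,b) = s(c,d)) : a = c ∧ b = d := by
  rw [Sym2.eq_iff] at h
  rcases h with ⟨rfl, rfl⟩ | ⟨rfl, rfl⟩
  · exact ⟨rfl, rfl⟩
  · exact absurd (hab.trans hcd) (lt_irrefl _)

lemma hFun_point2_lt {i j : Fin n} (hi : i ≠ 0) (hj : j ≠ 0) (hij : i < j) :
    hFun n (point2 n i j) = 1 := by
  have h0i : (0 : Fin n) < i := pos_of_ne_zero' n hi
  have h0j : (0 : Fin n) < j := pos_of_ne_zero' n hj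
  rw [hFun_eq]
  set T : Finset (Fin n × Fin n) := {((0:Fin n), i), ((0:Fin n), j), (i, j)} with hT
  have hTP : T ⊆ Pn n := by
    intro p hp
    simp only [hT, Finset.mem_insert, Finset.mem_singleton] at hp
    rcases hp with rfl | rfl | rfl <;> simp [Pn, h0i, h0j, hij]
  rw [← Finset.sum_subset hTP ?h0]
  case h0 =>
    rintro ⟨a, b⟩ hp hnp
    have hab : a < b := (Finset.mem_filter.mp hp).2
    have : ext n (point2 n i j) s(a,b) = 0 := by
      rw [ext_point2 n i j (ne_of_lt hab), if_neg]
      rintro (hc | hc | hc)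
      · obtain ⟨rfl, rfl⟩ := sorted_pair_eq n hab h0i hc
        exact hnp (by simp [hT])
      · obtain ⟨rfl, rfl⟩ := sorted_pair_eq n hab h0j hc
        exact hnp (by simp [hT])
      · obtain ⟨rfl, rfl⟩ := sorted_pair_eq n hab hij hc
        exact hnp (by simp [hT])
    rw [this]; split <;> simp
  have h1 : ((0:Fin n), i) ≠ ((0:Fin n), j) := by
    intro h; exact absurd (congrArg Prod.snd h) (ne_of_lt hij)
  have h2 : ((0:Fin n), i) ≠ (i, j) := by
    intro h; exact hi (congrArg Prod.fst h).symm
  have h3 : ((0:Fin n), j) ≠ (i, j) := by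
    intro h; exact hi (congrArg Prod.fst h).symm
  rw [hT, Finset.sum_insert (by simp [h1, h2]), Finset.sum_insert (by simp [h3]),
    Finset.sum_singleton]
  rw [if_pos (Or.inl rfl), if_pos (Or.inl rfl), if_neg (by push_neg; exact ⟨hi, hj⟩)]
  rw [ext_point2 n i j (ne_of_lt h0i), ext_point2 n i j (ne_of_lt h0j),
    ext_point2 n i j (ne_of_lt hij)]
  rw [if_pos (Or.inl rfl), if_pos (Or.inr (Or.inl rfl)), if_pos (Or.inr (Or.inr rfl))]
  ring

lemma hFun_point2 {i j : Fin n} (hi : i ≠ 0) (hj : j ≠ 0) (hij : i ≠ j) :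
    hFun n (point2 n i j) = 1 := by
  rcases lt_or_gt_of_ne hij with h | h
  · exact hFun_point2_lt n hi hj h
  · rw [point2_comm]; exact hFun_point2_lt n hj hi h

end helpers3
section helpers4
variable (n : ℕ) [NeZero n]

lemma realizable_point1 {i : Fin n} (hi : i ≠ 0) :
    RealizablePoint (Kgraph n) (point1 n i) := by
  refine ⟨Fin n, fun v => if v = i then 0 else v, ?_⟩
  intro v w h
  have hvw : v ≠ w := h.ne
  show (if s(v,w) = s((0:Fin n), i) then (1:ℝ) else 0) = _
  have key : (s(v,w) = s((0:Fin n), i)) ↔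
      ((if v = i then (0:Fin n) else v) = (if w = i then 0 else w)) := by
    rw [Sym2.eq_iff]
    constructor
    · rintro (⟨rfl, rfl⟩ | ⟨rfl, rfl⟩) <;> simp [hi, Ne.symm hi]
    · intro hl
      by_cases hvi : v = i <;> by_cases hwi : w = i <;>
        simp_all <;> tauto
  simp only []
  by_cases hc : s(v,w) = s((0:Fin n), i)
  · rw [if_pos hc, if_pos (key.mp hc)]
  · rw [if_neg hc, if_neg (fun hh => hc (key.mpr hh))]

lemma realizable_point2 {i j : Fin n} (hi : i ≠ 0) (hj : j ≠ 0) (hij : i ≠ j) :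
    RealizablePoint (Kgraph n) (point2 n i j) := by
  refine ⟨Fin n, fun v => if v = i ∨ v = j then 0 else v, ?_⟩
  intro v w h
  have hvw : v ≠ w := h.ne
  show (if (s(v,w) = s((0:Fin n), i) ∨ s(v,w) = s((0:Fin n), j) ∨ s(v,w) = s(i, j))
      then (1:ℝ) else 0) = _
  have key : (s(v,w) = s((0:Fin n), i) ∨ s(v,w) = s((0:Fin n), j) ∨ s(v,w) = s(i, j)) ↔
      ((if v = i ∨ v = j then (0:Fin n) else v) = (if w = i ∨ w = j then 0 else w)) := by
    simp only [Sym2.eq_iff]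
    constructor
    · rintro ((⟨rfl, rfl⟩ | ⟨rfl, rfl⟩) | (⟨rfl, rfl⟩ | ⟨rfl, rfl⟩) |
        (⟨rfl, rfl⟩ | ⟨rfl, rfl⟩)) <;>
        simp [hi, hj, hij, Ne.symm hi, Ne.symm hj, Ne.symm hij]
    · intro hl
      by_cases hvi : v = i <;> by_cases hvj : v = j <;> by_cases hwi : w = i <;>
        by_cases hwj : w = j <;>
        simp_all <;> tauto
  simp only []
  by_cases hc : (s(v,w) = s((0:Fin n), i) ∨ s(v,w) = s((0:Fin n), j) ∨ s(v,w) = s(i, j))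
  · rw [if_pos hc, if_pos (key.mp hc)]
  · rw [if_neg hc, if_neg (fun hh => hc (key.mpr hh))]

end helpers4
section validity
variable (n : ℕ) [NeZero n]

lemma hFun_linear : IsLinearMap ℝ (hFun n) := by
  constructor
  · intro r s
    simp only [hFun, Pi.add_apply]
    rw [← Finset.sum_add_distrib]
    exact Finset.sum_congr rfl fun e _ => by split <;> ring
  · intro c r
    simp only [hFun, Pi.smul_apply, smul_eq_mul]
    rw [Finset.mul_sum]
    exact Finset.sum_congr rfl fun e _ => by split <;> ring

lemma snd_ne_zero_of_mem_Pn {p : Fin n × Fin n} (hp : p ∈ Pn n) : p.2 ≠ 0 := by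
  have h := (Finset.mem_filter.mp hp).2
  intro h0; rw [h0] at h; simp [Fin.lt_def] at h

lemma hFun_le_one_of_realizable (r : (Kgraph n).edgeSet → ℝ)
    (hr : RealizablePoint (Kgraph n) r) : hFun n r ≤ 1 := by
  obtain ⟨Λ, lam, hr⟩ := hr
  -- the indicator function
  set I : Fin n × Fin n → ℝ := fun p => if lam p.1 = lam p.2 then 1 else 0 with hI
  have hext : ∀ a b : Fin n, a ≠ b → ext n r s(a,b) = I (a, b) := by
    intro a b h
    rw [ext_apply n r h]
    exact hr a b ((SimpleGraph.top_adj a b).mpr h)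
  set A := (Pn n).filter (fun p => p.1 = 0) with hA
  set B := (Pn n).filter (fun p => ¬ p.1 = 0) with hB
  have hsplit : hFun n r = (∑ p ∈ A, I p) - (∑ p ∈ B, I p) := by
    rw [hFun_eq, ← Finset.sum_filter_add_sum_filter_not (Pn n) (fun p => p.1 = 0)]
    rw [← hA, ← hB]
    congr 1
    · refine Finset.sum_congr rfl fun p hp => ?_
      have h1 : p.1 = 0 := (Finset.mem_filter.mp hp).2
      have hlt : p.1 < p.2 := (Finset.mem_filter.mp (Finset.mem_filter.mp hp).1).2
      rw [if_pos (Or.inl h1), hext p.1 p.2 (ne_of_lt hlt)]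
    · rw [← Finset.sum_neg_distrib]
      refine Finset.sum_congr rfl fun p hp => ?_
      have h1 : ¬ p.1 = 0 := (Finset.mem_filter.mp hp).2
      have hpn : p ∈ Pn n := (Finset.mem_filter.mp hp).1
      have hlt : p.1 < p.2 := (Finset.mem_filter.mp hpn).2
      rw [if_neg (by push_neg; exact ⟨h1, snd_ne_zero_of_mem_Pn n hpn⟩),
        hext p.1 p.2 (ne_of_lt hlt)]
  set S : Finset (Fin n) := Finset.univ.filter (fun b => ¬ b = 0 ∧ lam 0 = lam b) with hS
  set k := S.card with hk
  -- the A-sum is k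
  have hAsum : (∑ p ∈ A, I p) = k := by
    have : (∑ p ∈ A, I p)
        = ∑ b ∈ Finset.univ.filter (fun b : Fin n => ¬ b = 0), (if lam 0 = lam b then (1:ℝ) else 0) := by
      refine Finset.sum_bij (fun p _ => p.2) ?_ ?_ ?_ ?_
      · intro p hp
        simp only [Finset.mem_filter, Finset.mem_univ, true_and]
        exact snd_ne_zero_of_mem_Pn n (Finset.mem_filter.mp hp).1
      · intro p hp q hq h
        have h1 : p.1 = 0 := (Finset.mem_filter.mp hp).2
        have h2 : q.1 = 0 := (Finset.mem_filter.mp hq).2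
        exact Prod.ext (h1.trans h2.symm) h
      · intro b hb
        have hb0 : ¬ b = 0 := (Finset.mem_filter.mp hb).2
        exact ⟨((0 : Fin n), b), Finset.mem_filter.mpr
          ⟨Finset.mem_filter.mpr ⟨Finset.mem_univ _, pos_of_ne_zero' n hb0⟩, rfl⟩, rfl⟩
      · intro p hp
        have h1 : p.1 = 0 := (Finset.mem_filter.mp hp).2
        simp [hI, h1]
    have hfil : Finset.filter (fun x => lam 0 = lam x)
        (Finset.filter (fun b => ¬b = 0) Finset.univ) = S := by
      rw [hS, Finset.filter_filter]
    rw [this, Finset.sum_boole, hfil]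
  -- the B-sum is at least card Q
  set Q := (S ×ˢ S).filter (fun p => p.1 < p.2) with hQ
  have hQB : Q ⊆ B := by
    intro p hp
    obtain ⟨hmem, hlt⟩ := Finset.mem_filter.mp hp
    obtain ⟨h1, h2⟩ := Finset.mem_product.mp hmem
    refine Finset.mem_filter.mpr ⟨Finset.mem_filter.mpr ⟨Finset.mem_univ _, hlt⟩, ?_⟩
    exact ((Finset.mem_filter.mp h1).2).1
  have hBsum : (Q.card : ℝ) ≤ ∑ p ∈ B, I p := by
    calc (Q.card : ℝ) = ∑ p ∈ Q, I p := by
          rw [Finset.sum_congr rfl (fun p hp => ?_), Finset.sum_const, nsmul_eq_mul, mul_one]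
          obtain ⟨hmem, _⟩ := Finset.mem_filter.mp hp
          obtain ⟨h1, h2⟩ := Finset.mem_product.mp hmem
          have e1 : lam 0 = lam p.1 := ((Finset.mem_filter.mp h1).2).2
          have e2 : lam 0 = lam p.2 := ((Finset.mem_filter.mp h2).2).2
          simp [hI, e1.symm.trans e2]
      _ ≤ ∑ p ∈ B, I p := by
          refine Finset.sum_le_sum_of_subset_of_nonneg hQB fun p _ _ => ?_
          simp only [hI]; split <;> norm_num
  -- 2 * card Q = k^2 - k
  have hQcard : 2 * Q.card = k * k - k := by
    have hoff : S.offDiag = Q ∪ (S.offDiag.filter (fun p => ¬ p.1 < p.2)) := by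
      ext p
      simp only [Finset.mem_union, Finset.mem_filter, hQ, Finset.mem_offDiag,
        Finset.mem_product]
      constructor
      · rintro ⟨h1, h2, h3⟩
        by_cases h : p.1 < p.2
        · exact Or.inl ⟨⟨h1, h2⟩, h⟩
        · exact Or.inr ⟨⟨h1, h2, h3⟩, h⟩
      · rintro (⟨⟨h1, h2⟩, h⟩ | ⟨⟨h1, h2, h3⟩, _⟩)
        · exact ⟨h1, h2, ne_of_lt h⟩
        · exact ⟨h1, h2, h3⟩
    have hdisj : Disjoint Q (S.offDiag.filter (fun p => ¬ p.1 < p.2)) := by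
      refine Finset.disjoint_left.mpr fun p hp hp' => ?_
      exact (Finset.mem_filter.mp hp').2 (Finset.mem_filter.mp hp).2
    have hcard2 : (S.offDiag.filter (fun p => ¬ p.1 < p.2)).card = Q.card := by
      refine Finset.card_bij (fun p _ => (p.2, p.1)) ?_ ?_ ?_
      · intro p hp
        obtain ⟨hmem, hnlt⟩ := Finset.mem_filter.mp hp
        obtain ⟨h1, h2, h3⟩ := Finset.mem_offDiag.mp hmem
        exact Finset.mem_filter.mpr ⟨Finset.mem_product.mpr ⟨h2, h1⟩,
          lt_of_le_of_ne (not_lt.mp hnlt) (Ne.symm h3)⟩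
      · intro p hp q hq h
        exact Prod.ext (congrArg Prod.snd h) (congrArg Prod.fst h)
      · intro p hp
        obtain ⟨hmem, hlt⟩ := Finset.mem_filter.mp hp
        obtain ⟨h1, h2⟩ := Finset.mem_product.mp hmem
        exact ⟨(p.2, p.1), Finset.mem_filter.mpr ⟨Finset.mem_offDiag.mpr
          ⟨h2, h1, (ne_of_lt hlt).symm⟩, not_lt.mpr (le_of_lt hlt)⟩, rfl⟩
    have := Finset.card_union_of_disjoint hdisj
    rw [← hoff, hcard2, Finset.offDiag_card] at this
    rw [hk]
    omega
  -- conclude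
  rw [hsplit]
  have hkk : k ≤ k * k := by
    rcases Nat.eq_zero_or_pos k with h | h
    · simp [h]
    · exact Nat.le_mul_of_pos_left k h
  have hk2 : ((k * k - k : ℕ) : ℝ) = (k : ℝ) * k - k := by
    push_cast [Nat.cast_sub hkk]; ring
  have hQr : (2 : ℝ) * Q.card = (k : ℝ) * k - k := by
    have := congrArg (fun m : ℕ => (m : ℝ)) hQcard
    simp only [Nat.cast_mul, Nat.cast_ofNat] at this
    rw [this, hk2]
  have hineq : (k : ℝ) - Q.card ≤ 1 := by
    rcases Nat.lt_or_ge k 2 with h | h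
    · have h1 : (k : ℝ) ≤ 1 := by exact_mod_cast Nat.lt_succ_iff.mp h
      have h2 : (0:ℝ) ≤ (Q.card : ℝ) := Nat.cast_nonneg _
      linarith
    · have h2 : (2:ℝ) ≤ (k : ℝ) := by exact_mod_cast h
      nlinarith [hQr]
  linarith [hBsum]

lemma validity : ∀ r ∈ classicalPolytope (Kgraph n), hFun n r ≤ 1 := by
  intro r hr
  have hconv : Convex ℝ {x : (Kgraph n).edgeSet → ℝ | hFun n x ≤ 1} :=
    convex_halfSpace_le (hFun_linear n) 1
  have := convexHull_min (fun x hx => hFun_le_one_of_realizable n x hx) hconv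
  exact this hr

end validity
section psi
variable (n : ℕ) [NeZero n]

/-- uniform description of the points of `F`, parametrised by edges -/
noncomputable def psi (t : Sym2 (Fin n)) : (Kgraph n).edgeSet → ℝ :=
  fun e => if (∀ x ∈ (e : Sym2 (Fin n)), x = 0 ∨ x ∈ t) then 1 else 0

lemma psi_eq_point1 {i : Fin n} (hi : i ≠ 0) : psi n s((0:Fin n), i) = point1 n i := by
  funext e
  obtain ⟨e, he⟩ := e
  revert he
  induction e using Sym2.ind with
  | _ c d =>
    intro he
    have hcd : c ≠ d := (mem_edgeSetK n).mp he
    show (if _ then (1:ℝ) else 0) = (if _ then (1:ℝ) else 0)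
    have key : (∀ x ∈ s(c,d), x = 0 ∨ x ∈ s((0:Fin n), i)) ↔ s(c,d) = s((0:Fin n), i) := by
      rw [Sym2.ball, Sym2.eq_iff]
      simp only [Sym2.mem_iff]
      constructor
      · rintro ⟨hc, hd⟩
        rcases hc with rfl | rfl | rfl <;> rcases hd with rfl | rfl | rfl <;> tauto
      · rintro (⟨rfl, rfl⟩ | ⟨rfl, rfl⟩) <;> tauto
    exact if_congr key rfl rfl

lemma psi_eq_point2 {i j : Fin n} (hi : i ≠ 0) (hj : j ≠ 0) (hij : i ≠ j) :
    psi n s(i, j) = point2 n i j := by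
  funext e
  obtain ⟨e, he⟩ := e
  revert he
  induction e using Sym2.ind with
  | _ c d =>
    intro he
    have hcd : c ≠ d := (mem_edgeSetK n).mp he
    show (if _ then (1:ℝ) else 0) = (if _ then (1:ℝ) else 0)
    have key : (∀ x ∈ s(c,d), x = 0 ∨ x ∈ s(i, j)) ↔
        (s(c,d) = s((0:Fin n), i) ∨ s(c,d) = s((0:Fin n), j) ∨ s(c,d) = s(i, j)) := by
      rw [Sym2.ball]
      simp only [Sym2.mem_iff, Sym2.eq_iff]
      constructor
      · rintro ⟨hc, hd⟩
        rcases hc with rfl | rfl | rfl <;> rcases hd with rfl | rfl | rfl <;> tauto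
      · rintro ((⟨rfl, rfl⟩ | ⟨rfl, rfl⟩) | (⟨rfl, rfl⟩ | ⟨rfl, rfl⟩) |
          (⟨rfl, rfl⟩ | ⟨rfl, rfl⟩)) <;> tauto
    exact if_congr key rfl rfl

lemma psi_injOn : Set.InjOn (psi n) ((Kgraph n).edgeSet) := by
  rintro s hs t ht hst
  have eval : ∀ (u w : Sym2 (Fin n)) (hu : u ∈ (Kgraph n).edgeSet),
      psi n u = psi n w → ∀ x ∈ u, x = 0 ∨ x ∈ w := by
    intro u w hu h
    have h1 : psi n u (⟨u, hu⟩ : (Kgraph n).edgeSet) = 1 := by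
      simp only [psi]
      rw [if_pos (fun x hx => Or.inr hx)]
    rw [h] at h1
    simp only [psi] at h1
    by_contra hcon
    rw [if_neg hcon] at h1
    norm_num at h1
  have h1 := eval s t hs hst
  have h2 := eval t s ht hst.symm
  clear hst eval
  revert hs ht h1 h2
  induction s using Sym2.ind with
  | _ a b =>
    induction t using Sym2.ind with
    | _ c d =>
      intro hs ht h1 h2
      have hab : a ≠ b := (mem_edgeSetK n).mp hs
      have hcd : c ≠ d := (mem_edgeSetK n).mp ht
      rw [Sym2.ball] at h1 h2
      simp only [Sym2.mem_iff] at h1 h2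
      obtain ⟨ha, hb⟩ := h1
      obtain ⟨hc, hd⟩ := h2
      rw [Sym2.eq_iff]
      rcases ha with h1 | h1 | h1 <;> rcases hb with h2 | h2 | h2 <;>
        rcases hc with h3 | h3 | h3 <;> rcases hd with h4 | h4 | h4 <;> grind
end psi
section card
variable (n : ℕ) [NeZero n]

lemma Fset_eq_image : Fset n = psi n '' ((Kgraph n).edgeSet) := by
  ext p
  constructor
  · rintro (⟨i, hi, rfl⟩ | ⟨i, j, hi, hj, hij, rfl⟩)
    · exact ⟨s((0:Fin n), i), (mem_edgeSetK n).mpr (Ne.symm hi), psi_eq_point1 n hi⟩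
    · exact ⟨s(i, j), (mem_edgeSetK n).mpr hij, psi_eq_point2 n hi hj hij⟩
  · rintro ⟨t, ht, rfl⟩
    revert ht
    induction t using Sym2.ind with
    | _ a b =>
      intro ht
      have hab : a ≠ b := (mem_edgeSetK n).mp ht
      by_cases ha : a = 0
      · subst ha
        left
        exact ⟨b, Ne.symm hab, psi_eq_point1 n (Ne.symm hab)⟩
      · by_cases hb : b = 0
        · subst hb
          left
          refine ⟨a, ha, ?_⟩
          rw [← psi_eq_point1 n ha, show s(a, (0:Fin n)) = s((0:Fin n), a) from Sym2.eq_swap]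
        · right
          exact ⟨a, b, ha, hb, hab, psi_eq_point2 n ha hb hab⟩

lemma Fset_ncard : (Fset n).ncard = n * (n - 1) / 2 := by
  rw [Fset_eq_image, Set.ncard_image_of_injOn (psi_injOn n)]
  have h1 : ((Kgraph n).edgeSet).ncard = (Kgraph n).edgeFinset.card := by
    rw [Set.ncard_eq_toFinset_card']
    exact congrArg Finset.card (Set.toFinset_congr rfl)
  rw [h1, SimpleGraph.card_edgeFinset_top_eq_card_choose_two, Fintype.card_fin,
    Nat.choose_two_right]

end card
section affind
variable (n : ℕ) [NeZero n]

lemma point2_congr {i j k l : Fin n} (h : s(k,l) = s(i,j)) :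
    point2 n k l = point2 n i j := by
  rw [Sym2.eq_iff] at h
  rcases h with ⟨rfl, rfl⟩ | ⟨rfl, rfl⟩
  · rfl
  · exact point2_comm n k l

lemma affind : AffineIndependent ℝ (fun p : Fset n => (p : (Kgraph n).edgeSet → ℝ)) := by
  rw [affineIndependent_iff]
  intro s w _ hsum
  have step1 : ∀ p ∈ s, ∀ i j : Fin n, i ≠ 0 → j ≠ 0 → i ≠ j →
      (p : (Kgraph n).edgeSet → ℝ) = point2 n i j → w p = 0 := by
    intro p hp i j hi hj hij hpv
    have he : s(i,j) ∈ (Kgraph n).edgeSet := (mem_edgeSetK n).mpr hij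
    have hEval := congrFun hsum (⟨s(i,j), he⟩ : (Kgraph n).edgeSet)
    rw [Finset.sum_apply] at hEval
    simp only [Pi.smul_apply, smul_eq_mul, Pi.zero_apply] at hEval
    rw [Finset.sum_eq_single_of_mem p hp ?_] at hEval
    · rw [hpv] at hEval
      have hone : point2 n i j ⟨s(i,j), he⟩ = 1 := by
        simp [point2]
      rw [hone, mul_one] at hEval
      exact hEval
    · intro q hq hqp
      rcases q.2 with ⟨k, hk, hq1⟩ | ⟨k, l, hk, hl, hkl, hq2⟩
      · have hz : (q : (Kgraph n).edgeSet → ℝ) ⟨s(i,j), he⟩ = 0 := by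
          rw [hq1]
          simp only [point1]
          rw [if_neg]
          intro hc
          rw [Sym2.eq_iff] at hc
          rcases hc with ⟨h1, _⟩ | ⟨_, h2⟩
          · exact hi h1
          · exact hj h2
        rw [hz, mul_zero]
      · have hz : (q : (Kgraph n).edgeSet → ℝ) ⟨s(i,j), he⟩ = 0 := by
          rw [hq2]
          simp only [point2]
          rw [if_neg]
          rintro (hc | hc | hc)
          · rw [Sym2.eq_iff] at hc
            rcases hc with ⟨h1, _⟩ | ⟨_, h2⟩
            · exact hi h1
            · exact hj h2
          · rw [Sym2.eq_iff] at hc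
            rcases hc with ⟨h1, _⟩ | ⟨_, h2⟩
            · exact hi h1
            · exact hj h2
          · exact hqp (Subtype.ext (hq2.trans ((point2_congr n hc.symm).trans hpv.symm)))
        rw [hz, mul_zero]
  intro p hp
  rcases p.2 with ⟨i, hi, hp1⟩ | ⟨i, j, hi, hj, hij, hp2⟩
  · -- p = point1 i
    have he : s((0:Fin n), i) ∈ (Kgraph n).edgeSet := (mem_edgeSetK n).mpr (Ne.symm hi)
    have hEval := congrFun hsum (⟨s((0:Fin n), i), he⟩ : (Kgraph n).edgeSet)
    rw [Finset.sum_apply] at hEval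
    simp only [Pi.smul_apply, smul_eq_mul, Pi.zero_apply] at hEval
    rw [Finset.sum_eq_single_of_mem p hp ?_] at hEval
    · rw [hp1] at hEval
      have hone : point1 n i ⟨s((0:Fin n), i), he⟩ = 1 := by
        simp [point1]
      rw [hone, mul_one] at hEval
      exact hEval
    · intro q hq hqp
      rcases q.2 with ⟨k, hk, hq1⟩ | ⟨k, l, hk, hl, hkl, hq2⟩
      · have hz : (q : (Kgraph n).edgeSet → ℝ) ⟨s((0:Fin n), i), he⟩ = 0 := by
          rw [hq1]
          simp only [point1]
          rw [if_neg]
          intro hc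
          rw [Sym2.eq_iff] at hc
          rcases hc with ⟨_, h2⟩ | ⟨_, h1⟩
          · exact hqp (Subtype.ext (hq1.trans (h2 ▸ hp1.symm)))
          · exact hi h1
        rw [hz, mul_zero]
      · rw [step1 q hq k l hk hl hkl hq2, zero_mul]
  · exact step1 p hp i j hi hj hij hp2

end affind
/-- For `n ≥ 2`: (i) every element of `F` is a realizable edge `{0,1}`-labelling of `K_n`
(hence a vertex of `C_{K_n}`); (ii) every element of `F` saturates the inequality,
`h_n(r) = 1`; (iii) `F` has exactly `n(n−1)/2` elements; (iv) `F` is affinely independent.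
Together with the validity of `h_n(r) ≤ 1` on `C_{K_n}` (also stated), this says the
inequality `h_n(r) ≤ 1` defines a facet of the classical polytope `C_{K_n}`. -/
theorem stmt10 (n : ℕ) [NeZero n] (hn : 2 ≤ n) :
    (∀ r ∈ classicalPolytope (Kgraph n), hFun n r ≤ 1) ∧
    (∀ p ∈ Fset n, RealizablePoint (Kgraph n) p) ∧
    (∀ p ∈ Fset n, hFun n p = 1) ∧
    (Fset n).ncard = n * (n - 1) / 2 ∧
    AffineIndependent ℝ (fun p : Fset n => (p : (Kgraph n).edgeSet → ℝ)) := by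
  refine ⟨validity n, ?_, ?_, Fset_ncard n, affind n⟩
  · rintro p (⟨i, hi, rfl⟩ | ⟨i, j, hi, hj, hij, rfl⟩)
    · exact realizable_point1 n hi
    · exact realizable_point2 n hi hj hij
  · rintro p (⟨i, hi, rfl⟩ | ⟨i, j, hi, hj, hij, rfl⟩)
    · exact hFun_point1 n hi
    · exact hFun_point2 n hi hj hij
end

section
/- Let H be a finite simple graph and H_⋆ the graph obtained from H by adjoining a new vertex ψ together with edges {ψ, v} for every v ∈ V(H), so V(H_⋆) = V(H) ⊔ {ψ} and E(H_⋆) = E(H) ∪ { {ψ,v} : v ∈ V(H) }. For a subset S ⊆ V(H), let α_S : E(H_⋆) → {0,1} be the edge labelling with α_S(e) = 0 for all e ∈ E(H) and α_S({ψ,v}) = 1 if v ∈ S and 0 otherwise. Then α_S is a realizable edge labelling of H_⋆ if and only if S is a stable set (independent set) of H, i.e., no two vertices of S are adjacent in H. -/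
open SimpleGraph

variable {V : Type*}

/-- The graph `H_⋆` obtained from `H` by adjoining a new vertex `ψ` (modelled by `none`
in `Option V`) together with edges `{ψ, v}` for every `v ∈ V(H)`. -/
def starGraph (H : SimpleGraph V) : SimpleGraph (Option V) where
  Adj x y := x ≠ y ∧ ∀ v w : V, x = some v → y = some w → H.Adj v w
  symm := ⟨fun x y ⟨hne, h⟩ => ⟨hne.symm, fun v w hy hx => (h w v hx hy).symm⟩⟩
  loopless := ⟨fun x h => h.1 rfl⟩

/-- `α_S` is realizable for `H_⋆` iff `S` is a stable (independent) set of `H`. Here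
`α_S` assigns `0` to every edge of `H` and, on the new edge `{ψ, v}`, the value `1`
iff `v ∈ S`. -/
theorem stmt11 [Fintype V] (H : SimpleGraph V) (S : Set V) :
    Realizable (_root_.starGraph H)
      (fun e => ∃ v ∈ S, (e : Sym2 (Option V)) = s((none : Option V), some v)) ↔
    ∀ v ∈ S, ∀ w ∈ S, ¬ H.Adj v w := by
  classical
  constructor
  · rintro ⟨Λ, lam, hlam⟩ v hv w hw hvw
    have hadjv : (_root_.starGraph H).Adj none (some v) := ⟨by simp, by simp⟩
    have hadjw : (_root_.starGraph H).Adj none (some w) := ⟨by simp, by simp⟩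
    have hadjvw : (_root_.starGraph H).Adj (some v) (some w) :=
      ⟨by simp [hvw.ne], fun a b ha hb => by
        cases ha; cases hb; exact hvw⟩
    have h1 := (hlam none (some v) hadjv).mp ⟨v, hv, rfl⟩
    have h2 := (hlam none (some w) hadjw).mp ⟨w, hw, rfl⟩
    have h3 := (hlam (some v) (some w) hadjvw).mpr (h1.symm.trans h2)
    obtain ⟨u, _, hu⟩ := h3
    simp [edgeMk, Sym2.eq_iff] at hu
  · intro hS
    let f : V → ℕ := fun v => (Fintype.equivFin V v : ℕ)
    have hf : Function.Injective f := fun a b h => (Fintype.equivFin V).injective (Fin.ext h)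
    refine ⟨Option ℕ, fun x => match x with
      | none => none
      | some v => if v ∈ S then none else some (f v), ?_⟩
    intro x y h
    match x, y with
    | none, none => exact absurd rfl h.1
    | none, some v =>
      simp only [edgeMk, Sym2.eq_iff]
      by_cases hv : v ∈ S <;> simp [hv]
    | some v, none =>
      simp only [edgeMk, Sym2.eq_iff]
      by_cases hv : v ∈ S <;> simp [hv]
    | some v, some w =>
      have hadj : H.Adj v w := h.2 v w rfl rfl
      have hne : v ≠ w := hadj.ne
      simp only [edgeMk, Sym2.eq_iff]
      by_cases hv : v ∈ S <;> by_cases hw : w ∈ S <;>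
        simp [hv, hw, hne, hf.ne hne]
      exact hS v hv w hw hadj
end

section
/- Let H be a finite simple graph and H_⋆ the graph with V(H_⋆) = V(H) ⊔ {ψ} and E(H_⋆) = E(H) ∪ { {ψ,v} : v ∈ V(H) }, so that E(H_⋆) is identified with E(H) ⊔ V(H) (the new edge {ψ,v} corresponding to v). Let C⁰_{H_⋆} = { r ∈ C_{H_⋆} : r_e = 0 for all e ∈ E(H) }, and let STAB(H) ⊆ [0,1]^{V(H)} be the convex hull of the characteristic vectors χ_S of the stable sets S of H. Then, under the identification ℝ^{E(H_⋆)} ≅ ℝ^{E(H)} × ℝ^{V(H)}, one has C⁰_{H_⋆} = {0_{E(H)}} × STAB(H); in particular C⁰_{H_⋆} and STAB(H) are isomorphic polytopes. -/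
open SimpleGraph
open scoped Classical

variable {V : Type*}

theorem starGraph_adj_some (H : SimpleGraph V) {v w : V} (h : H.Adj v w) :
    (_root_.starGraph H).Adj (some v) (some w) :=
  ⟨by simpa using h.ne, fun a b ha hb => by
    cases Option.some.inj ha; cases Option.some.inj hb; exact h⟩

theorem starGraph_adj_none (H : SimpleGraph V) (v : V) :
    (_root_.starGraph H).Adj none (some v) :=
  ⟨fun h => (by cases h), fun a b ha _ => (by cases ha)⟩

/-- The stable set polytope `STAB(H) ⊆ [0,1]^{V(H)}`: the convex hull of the
characteristic vectors of the stable (independent) sets of `H`. -/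
noncomputable def stabPolytope (H : SimpleGraph V) : Set (V → ℝ) :=
  convexHull ℝ {x | ∃ S : Set V, (∀ v ∈ S, ∀ w ∈ S, ¬ H.Adj v w) ∧
    ∀ v, x v = if v ∈ S then 1 else 0}

/-- auxiliary symmetric pairing -/
def extPair (x : V → ℝ) : Option V → Option V → ℝ
  | none, some v => x v
  | some v, none => x v
  | _, _ => 0

theorem extPair_symm (x : V → ℝ) (a b : Option V) : extPair x a b = extPair x b a := by
  cases a <;> cases b <;> rfl

/-- the linear extension map `(V → ℝ) → (edgeSet → ℝ)` -/
noncomputable def extFun (H : SimpleGraph V) (x : V → ℝ) : (_root_.starGraph H).edgeSet → ℝ :=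
  fun e => Sym2.lift ⟨fun a b => extPair x a b, fun a b => extPair_symm x a b⟩ e.1

theorem extFun_some (H : SimpleGraph V) (x : V → ℝ) {v w : V} (h : H.Adj v w) :
    extFun H x (edgeMk (_root_.starGraph H) (starGraph_adj_some H h)) = 0 := rfl

theorem extFun_none (H : SimpleGraph V) (x : V → ℝ) (v : V) :
    extFun H x (edgeMk (_root_.starGraph H) (starGraph_adj_none H v)) = x v := rfl

theorem extFun_add (H : SimpleGraph V) (x y : V → ℝ) :
    extFun H (x + y) = extFun H x + extFun H y := by
  funext e
  obtain ⟨e, he⟩ := e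
  induction e using Sym2.ind with
  | _ a b => cases a <;> cases b <;> simp [extFun, extPair]

theorem extFun_smul (H : SimpleGraph V) (c : ℝ) (x : V → ℝ) :
    extFun H (c • x) = c • extFun H x := by
  funext e
  obtain ⟨e, he⟩ := e
  induction e using Sym2.ind with
  | _ a b => cases a <;> cases b <;> simp [extFun, extPair]

noncomputable def extMap (H : SimpleGraph V) : (V → ℝ) →ₗ[ℝ] ((_root_.starGraph H).edgeSet → ℝ) where
  toFun := extFun H
  map_add' := extFun_add H
  map_smul' := extFun_smul H

/-- a point vanishing on old edges is determined by its handle part -/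
theorem ext_eq (H : SimpleGraph V) (r : (_root_.starGraph H).edgeSet → ℝ)
    (h0 : ∀ v w (h : H.Adj v w), r (edgeMk (_root_.starGraph H) (starGraph_adj_some H h)) = 0) :
    r = extFun H (fun v => r (edgeMk (_root_.starGraph H) (starGraph_adj_none H v))) := by
  funext e
  obtain ⟨e, he⟩ := e
  induction e using Sym2.ind with
  | _ a b =>
    have hadj : (_root_.starGraph H).Adj a b := he
    match a, b with
    | none, none => exact absurd rfl hadj.1
    | none, some v =>
      exact congrArg r (Subtype.ext rfl : (⟨s(none, some v), he⟩ : (_root_.starGraph H).edgeSet)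
        = edgeMk (_root_.starGraph H) (starGraph_adj_none H v))
    | some v, none =>
      have hval : (⟨s(some v, none), he⟩ : (_root_.starGraph H).edgeSet)
          = edgeMk (_root_.starGraph H) (starGraph_adj_none H v) := Subtype.ext (Sym2.eq_swap)
      rw [hval]; rfl
    | some v, some w =>
      have hvw : H.Adj v w := hadj.2 v w rfl rfl
      have : (⟨s(some v, some w), he⟩ : (_root_.starGraph H).edgeSet)
          = edgeMk (_root_.starGraph H) (starGraph_adj_some H hvw) := Subtype.ext rfl
      rw [this, h0 v w hvw]; rfl

/-- the extension of a stable-set characteristic vector is realizable -/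
theorem ext_realizable (H : SimpleGraph V) [Fintype V] (x : V → ℝ) (S : Set V)
    (hS : ∀ v ∈ S, ∀ w ∈ S, ¬ H.Adj v w) (hx : ∀ v, x v = if v ∈ S then 1 else 0) :
    RealizablePoint (_root_.starGraph H) (extFun H x) := by
  classical
  obtain ⟨n, ⟨e⟩⟩ : ∃ n, Nonempty (V ≃ Fin n) := ⟨Fintype.card V, ⟨Fintype.equivFin V⟩⟩
  refine ⟨Option (Fin n),
    fun a => Option.casesOn a none (fun v => if v ∈ S then none else some (e v)), ?_⟩
  intro a b hab
  match a, b with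
  | none, none => exact absurd rfl hab.1
  | none, some v =>
    have h1 : extFun H x (edgeMk (_root_.starGraph H) hab) = x v := rfl
    rw [h1, hx v]
    by_cases hv : v ∈ S <;> simp [hv]
  | some v, none =>
    have h1 : extFun H x (edgeMk (_root_.starGraph H) hab) = x v := rfl
    rw [h1, hx v]
    by_cases hv : v ∈ S <;> simp [hv]
  | some v, some u =>
    have hvu : H.Adj v u := hab.2 v u rfl rfl
    have h1 : extFun H x (edgeMk (_root_.starGraph H) hab) = 0 := rfl
    rw [h1]
    have hne : ¬ ((if v ∈ S then (none : Option (Fin n)) else some (e v))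
        = (if u ∈ S then (none : Option (Fin n)) else some (e u))) := by
      by_cases hv : v ∈ S <;> by_cases hu : u ∈ S <;> simp only [hv, hu, if_pos, if_neg,
        ite_true, ite_false]
      · exact fun _ => hS v hv u hu hvu
      · exact fun h => (by cases h)
      · exact fun h => (by cases h)
      · intro h
        exact hvu.ne (e.injective (Option.some.inj h))
    simp [hne]

/-- Under the identification `ℝ^{E(H_⋆)} ≅ ℝ^{E(H)} × ℝ^{V(H)}` (the new edge `{ψ,v}`
corresponding to `v`), the constrained polytope `C⁰_{H_⋆}` equals `{0_{E(H)}} × STAB(H)`: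
a point `r` of `ℝ^{E(H_⋆)}` vanishing on `E(H)` lies in `C_{H_⋆}` iff its handle part
`v ↦ r_{ψ v}` lies in `STAB(H)`. -/
theorem stmt12 [Fintype V] (H : SimpleGraph V) (r : (_root_.starGraph H).edgeSet → ℝ) :
    (r ∈ classicalPolytope (_root_.starGraph H) ∧
      ∀ v w (h : H.Adj v w), r (edgeMk (_root_.starGraph H) (starGraph_adj_some H h)) = 0) ↔
    ((∀ v w (h : H.Adj v w), r (edgeMk (_root_.starGraph H) (starGraph_adj_some H h)) = 0) ∧
      (fun v : V => r (edgeMk (_root_.starGraph H) (starGraph_adj_none H v))) ∈ stabPolytope H) := by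
  constructor
  · rintro ⟨hC, h0⟩
    refine ⟨h0, ?_⟩
    rw [classicalPolytope, convexHull_eq] at hC
    obtain ⟨ι, t, w, z, hw0, hw1, hz, hcm⟩ := hC
    rw [Finset.centerMass_eq_of_sum_1 _ _ hw1] at hcm
    -- choose labellings
    choose Λ lam hlam using fun i (hi : i ∈ t) => hz i hi
    -- values of z
    have hzval : ∀ i ∈ t, ∀ e : (_root_.starGraph H).edgeSet, 0 ≤ z i e := by
      intro i hi e
      obtain ⟨e, he⟩ := e
      induction e using Sym2.ind with
      | _ a b =>
        have hadj : (_root_.starGraph H).Adj a b := he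
        have : (⟨s(a,b), he⟩ : (_root_.starGraph H).edgeSet) = edgeMk (_root_.starGraph H) hadj :=
          Subtype.ext rfl
        rw [this, hlam i hi a b hadj]
        split <;> norm_num
    -- vanishing on old edges for nonzero weights
    have hzero : ∀ i ∈ t, w i ≠ 0 → ∀ v' w' (h : H.Adj v' w'),
        z i (edgeMk (_root_.starGraph H) (starGraph_adj_some H h)) = 0 := by
      intro i hi hwi v' w' h
      have hre : r (edgeMk (_root_.starGraph H) (starGraph_adj_some H h)) =
          ∑ j ∈ t, w j * z j (edgeMk (_root_.starGraph H) (starGraph_adj_some H h)) := by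
        rw [← hcm]; simp [Finset.sum_apply]
      have hterm : ∀ j ∈ t, 0 ≤ w j * z j (edgeMk (_root_.starGraph H) (starGraph_adj_some H h)) :=
        fun j hj => mul_nonneg (hw0 j hj) (hzval j hj _)
      have := (Finset.sum_eq_zero_iff_of_nonneg hterm).mp
        (by rw [← hre, h0 v' w' h]) i hi
      rcases mul_eq_zero.mp this with h' | h'
      · exact absurd h' hwi
      · exact h'
    -- the stable sets
    set t' := t.filter (fun i => w i ≠ 0) with ht'
    have ht'sub : ∀ i ∈ t', i ∈ t := fun i hi => (Finset.mem_filter.mp hi).1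
    have hw1' : ∑ i ∈ t', w i = 1 := by
      rw [← hw1]
      exact Finset.sum_filter_ne_zero t
    set χ : ∀ i (_ : i ∈ t), V → ℝ := fun i hi v =>
      if lam i hi (some v) = lam i hi none then 1 else 0 with hχ
    have hmem : ∀ i (hi : i ∈ t'), χ i (ht'sub i hi) ∈
        {x : V → ℝ | ∃ S : Set V, (∀ v ∈ S, ∀ w ∈ S, ¬ H.Adj v w) ∧
          ∀ v, x v = if v ∈ S then 1 else 0} := by
      intro i hi
      have hit := ht'sub i hi
      have hwi : w i ≠ 0 := (Finset.mem_filter.mp hi).2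
      refine ⟨{v | lam i hit (some v) = lam i hit none}, ?_, fun v => rfl⟩
      intro a ha b hb hab
      have h1 : z i (edgeMk (_root_.starGraph H) (starGraph_adj_some H hab)) =
          if lam i hit (some a) = lam i hit (some b) then 1 else 0 :=
        hlam i hit _ _ _
      rw [hzero i hit hwi a b hab] at h1
      have : lam i hit (some a) = lam i hit (some b) := ha.trans hb.symm
      simp [this] at h1
    -- handle part equals the convex combination of the χ's
    have hhandle : (fun v : V => r (edgeMk (_root_.starGraph H) (starGraph_adj_none H v))) =
        ∑ i ∈ t'.attach, w i.1 • χ i.1 (ht'sub i.1 i.2) := by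
      funext v
      have h1 : r (edgeMk (_root_.starGraph H) (starGraph_adj_none H v)) =
          ∑ j ∈ t, w j * z j (edgeMk (_root_.starGraph H) (starGraph_adj_none H v)) := by
        rw [← hcm]; simp [Finset.sum_apply]
      rw [h1]
      have h2 : ∑ j ∈ t, w j * z j (edgeMk (_root_.starGraph H) (starGraph_adj_none H v)) =
          ∑ j ∈ t', w j * z j (edgeMk (_root_.starGraph H) (starGraph_adj_none H v)) := by
        rw [ht']
        exact (Finset.sum_filter_of_ne (fun j hj hne => by
          intro h; apply hne; rw [h, zero_mul])).symm
      rw [h2, ← Finset.sum_attach t' (fun j => w j * z j (edgeMk (_root_.starGraph H) (starGraph_adj_none H v)))]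
      rw [Finset.sum_apply]
      refine Finset.sum_congr rfl ?_
      intro j _
      have hjt := ht'sub j.1 j.2
      have : z j.1 (edgeMk (_root_.starGraph H) (starGraph_adj_none H v)) =
          if lam j.1 hjt none = lam j.1 hjt (some v) then 1 else 0 := hlam j.1 hjt _ _ _
      rw [Pi.smul_apply, this, hχ]
      simp only [smul_eq_mul]
      congr 1
      by_cases h : lam j.1 hjt none = lam j.1 hjt (some v)
      · rw [if_pos h, if_pos h.symm]
      · rw [if_neg h, if_neg (fun hh => h hh.symm)]
    rw [stabPolytope, hhandle]
    have := Finset.centerMass_mem_convexHull (R := ℝ) t'.attach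
      (w := fun i => w i.1) (z := fun i => χ i.1 (ht'sub i.1 i.2))
      (fun i _ => hw0 i.1 (ht'sub i.1 i.2))
      (by rw [Finset.sum_attach t' w, hw1']; norm_num)
      (fun i _ => hmem i.1 i.2)
    rwa [Finset.centerMass_eq_of_sum_1 _ _ (by rw [Finset.sum_attach t' w, hw1'])] at this
  · rintro ⟨h0, hstab⟩
    refine ⟨?_, h0⟩
    rw [ext_eq H r h0]
    rw [stabPolytope] at hstab
    have himg := (extMap H).image_convexHull {x : V → ℝ | ∃ S : Set V,
      (∀ v ∈ S, ∀ w ∈ S, ¬ H.Adj v w) ∧ ∀ v, x v = if v ∈ S then 1 else 0}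
    have hmem : extMap H (fun v => r (edgeMk (_root_.starGraph H) (starGraph_adj_none H v)))
        ∈ convexHull ℝ ((extMap H) '' {x : V → ℝ | ∃ S : Set V,
          (∀ v ∈ S, ∀ w ∈ S, ¬ H.Adj v w) ∧ ∀ v, x v = if v ∈ S then 1 else 0}) := by
      rw [← himg]
      exact Set.mem_image_of_mem _ hstab
    refine convexHull_mono ?_ hmem
    rintro _ ⟨x, ⟨S, hS, hx⟩, rfl⟩
    exact ext_realizable H x S hS hx
end

section
/- Let n ≥ 3, let (Λ, F) be a measurable space, and let μ_1, …, μ_n be probability measures on (Λ, F). Define the total variation distance d_TV(μ, ν) = sup_{E ∈ F} |μ(E) − ν(E)|, and define the edge weighting r on the n-cycle graph C_n (vertices 1, …, n, edges {i, i+1} for i = 1, …, n−1 and {1, n}) by r_{i,i+1} = 1 − d_TV(μ_i, μ_{i+1}) and r_{1,n} = 1 − d_TV(μ_1, μ_n). Then r satisfies every cycle inequality of C_n, i.e., for every edge e of C_n: −r_e + Σ_{e' ≠ e} r_{e'} ≤ n − 2. -/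
open MeasureTheory

/-- The total variation distance `d_TV(μ, ν) = sup_{E measurable} |μ(E) − ν(E)|`. -/
noncomputable def tvDist {Λ : Type*} [MeasurableSpace Λ] (μ ν : Measure Λ) : ℝ :=
  ⨆ E : {E : Set Λ // MeasurableSet E}, |(μ E.1).toReal - (ν E.1).toReal|

section aux

variable {Λ : Type*} [MeasurableSpace Λ]

open Fin.CommRing

lemma tvDist_bdd (μ ν : Measure Λ) [IsProbabilityMeasure μ] [IsProbabilityMeasure ν] :
    BddAbove (Set.range fun E : {E : Set Λ // MeasurableSet E} =>
      |(μ E.1).toReal - (ν E.1).toReal|) := by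
  refine ⟨1, ?_⟩
  rintro x ⟨E, rfl⟩
  have h1 : (μ E.1).toReal ≤ 1 := by
    have := prob_le_one (μ := μ) (s := E.1)
    simpa using ENNReal.toReal_mono (by simp) this
  have h2 : (ν E.1).toReal ≤ 1 := by
    have := prob_le_one (μ := ν) (s := E.1)
    simpa using ENNReal.toReal_mono (by simp) this
  have h3 : (0:ℝ) ≤ (μ E.1).toReal := ENNReal.toReal_nonneg
  have h4 : (0:ℝ) ≤ (ν E.1).toReal := ENNReal.toReal_nonneg
  rw [abs_sub_le_iff]
  constructor <;> linarith

lemma tvDist_nonneg (μ ν : Measure Λ) [IsProbabilityMeasure μ] [IsProbabilityMeasure ν] :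
    0 ≤ tvDist μ ν := by
  have := le_ciSup (tvDist_bdd μ ν) ⟨∅, MeasurableSet.empty⟩
  refine le_trans ?_ this
  positivity

lemma tvDist_self (μ : Measure Λ) [IsProbabilityMeasure μ] : tvDist μ μ = 0 := by
  refine le_antisymm (ciSup_le fun E => by simp) (tvDist_nonneg μ μ)

lemma tvDist_comm (μ ν : Measure Λ) : tvDist μ ν = tvDist ν μ := by
  unfold tvDist
  congr 1
  ext E
  rw [abs_sub_comm]

lemma tvDist_triangle (μ ν ρ : Measure Λ) [IsProbabilityMeasure μ]
    [IsProbabilityMeasure ν] [IsProbabilityMeasure ρ] :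
    tvDist μ ρ ≤ tvDist μ ν + tvDist ν ρ := by
  refine ciSup_le fun E => ?_
  calc |(μ E.1).toReal - (ρ E.1).toReal|
      ≤ |(μ E.1).toReal - (ν E.1).toReal| + |(ν E.1).toReal - (ρ E.1).toReal| :=
        abs_sub_le _ _ _
    _ ≤ tvDist μ ν + tvDist ν ρ :=
        add_le_add (le_ciSup (tvDist_bdd μ ν) E) (le_ciSup (tvDist_bdd ν ρ) E)

lemma tvDist_path {n : ℕ} [NeZero n] (μ : Fin n → Measure Λ)
    [∀ i, IsProbabilityMeasure (μ i)] (a : Fin n) :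
    ∀ k : ℕ, tvDist (μ a) (μ (a + (k : Fin n))) ≤
      ∑ j ∈ Finset.range k, tvDist (μ (a + (j : Fin n))) (μ (a + (j : Fin n) + 1)) := by
  intro k
  induction k with
  | zero => simp [tvDist_self]
  | succ k ih =>
      rw [Finset.sum_range_succ]
      refine le_trans (tvDist_triangle (μ a) (μ (a + (k : Fin n))) _) ?_
      have : a + ((k + 1 : ℕ) : Fin n) = a + (k : Fin n) + 1 := by
        push_cast; ring
      rw [this]
      exact add_le_add ih le_rfl

end aux

/-- Let `μ_1, …, μ_n` (`n ≥ 3`) be probability measures, and weight the edges of the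
`n`-cycle (edge `i` joining vertices `i` and `i+1` cyclically, vertices modelled by
`Fin n`) by `r_i = 1 − d_TV(μ_i, μ_{i+1})`. Then `r` satisfies every cycle inequality:
for every edge `e`, `−r_e + Σ_{e' ≠ e} r_{e'} ≤ n − 2`. -/
theorem stmt13 (n : ℕ) [NeZero n] (hn : 3 ≤ n) {Λ : Type*} [MeasurableSpace Λ]
    (μ : Fin n → Measure Λ) [∀ i, IsProbabilityMeasure (μ i)]
    (r : Fin n → ℝ) (hr : ∀ i, r i = 1 - tvDist (μ i) (μ (i + 1))) :
    ∀ e : Fin n, - r e + ∑ e' ∈ Finset.univ.erase e, r e' ≤ (n : ℝ) - 2 := by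
  intro e
  letI := Fin.instCommRing n
  set d : Fin n → ℝ := fun i => tvDist (μ i) (μ (i + 1)) with hd
  have hn1 : 1 ≤ n := le_trans (by norm_num) hn
  have hlt : n - 1 < n := Nat.sub_lt (Nat.pos_of_ne_zero (NeZero.ne n)) one_pos
  have hneg : ((n - 1 : ℕ) : Fin n) = -1 := by
    have h0 : ((n - 1 : ℕ) : Fin n) + 1 = 0 := by
      have : ((n - 1 : ℕ) : Fin n) + ((1:ℕ) : Fin n) = ((n : ℕ) : Fin n) := by
        rw [← Nat.cast_add, Nat.sub_add_cancel hn1]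
      simpa using this
    linear_combination h0
  have hrsum : ∑ e' ∈ Finset.univ.erase e, r e' =
      (n : ℝ) - 1 - ∑ e' ∈ Finset.univ.erase e, d e' := by
    rw [Finset.sum_congr rfl (fun x _ => hr x), Finset.sum_sub_distrib]
    have hcard : (Finset.univ.erase e).card = n - 1 := by
      rw [Finset.card_erase_of_mem (Finset.mem_univ e)]; simp
    rw [Finset.sum_const, hcard, nsmul_eq_mul, mul_one, Nat.cast_sub hn1, Nat.cast_one]
  have key : d e ≤ ∑ e' ∈ Finset.univ.erase e, d e' := by
    have hpath := tvDist_path μ (e + 1) (n - 1)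
    have hend : e + 1 + ((n - 1 : ℕ) : Fin n) = e := by rw [hneg]; ring
    rw [hend] at hpath
    have hsymm : tvDist (μ (e + 1)) (μ e) = d e := by rw [tvDist_comm]
    rw [hsymm] at hpath
    refine le_trans hpath (le_of_eq ?_)
    refine Finset.sum_nbij' (fun j => e + 1 + (j : Fin n))
      (fun x => ((x - e - 1 : Fin n) : ℕ)) ?_ ?_ ?_ ?_ ?_
    · intro j hj
      simp only [Finset.mem_range] at hj
      simp only [Finset.mem_erase, Finset.mem_univ, and_true]
      intro hcontra
      have hjlt : j < n := lt_of_lt_of_le hj (Nat.sub_le n 1)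
      have h1 : (j : Fin n) = ((n - 1 : ℕ) : Fin n) := by
        rw [hneg]; linear_combination hcontra
      have h2 := congrArg Fin.val h1
      rw [Fin.val_cast_of_lt hjlt, Fin.val_cast_of_lt hlt] at h2
      omega
    · intro x hx
      simp only [Finset.mem_erase, Finset.mem_univ, and_true] at hx
      simp only [Finset.mem_range]
      have hne : (x - e - 1 : Fin n) ≠ ((n - 1 : ℕ) : Fin n) := by
        rw [hneg]
        intro hcontra
        exact hx (by linear_combination hcontra)
      have hv : (x - e - 1 : Fin n).val ≠ n - 1 := by
        intro h
        exact hne (Fin.ext (by rw [h, Fin.val_cast_of_lt hlt]))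
      have := (x - e - 1 : Fin n).isLt
      omega
    · intro j hj
      simp only [Finset.mem_range] at hj
      have hjlt : j < n := lt_of_lt_of_le hj (Nat.sub_le n 1)
      have h1 : (e + 1 + (j : Fin n) - e - 1) = (j : Fin n) := by ring
      simp only [h1, Fin.val_cast_of_lt hjlt]
    · intro x hx
      show e + 1 + ((((x - e - 1 : Fin n) : ℕ)) : Fin n) = x
      rw [Fin.cast_val_eq_self]
      ring
    · intro j hj
      simp only [hd]
  rw [hrsum, hr e]
  have hde : d e = tvDist (μ e) (μ (e + 1)) := rfl
  linarith [key, hde.le, hde.ge]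
end

section
/- Let n ≥ 3 and let C_n be the n-cycle graph. An edge weighting r ∈ [0,1]^{E(C_n)} lies in the classical polytope C_{C_n} if and only if for every edge e of C_n it satisfies the cycle inequality −r_e + Σ_{e' ≠ e} r_{e'} ≤ n − 2. That is, the classical polytope of the n-cycle is exactly the subset of the unit hypercube cut out by the n cycle inequalities. -/
open SimpleGraph
open scoped Classical

variable {V : Type*}

/-- The `n`-cycle graph on vertex set `Fin n` (cyclically, edge `{i, i+1}` for each `i`;
for `n ≥ 3` this is the usual cycle with edges `{i,i+1}`, `i = 1, …, n−1`, and `{1,n}`). -/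
def cycleG (n : ℕ) [NeZero n] : SimpleGraph (Fin n) where
  Adj i j := i ≠ j ∧ (j = i + 1 ∨ i = j + 1)
  symm := ⟨fun i j ⟨hne, h⟩ => ⟨hne.symm, h.symm⟩⟩
  loopless := ⟨fun i h => h.1 rfl⟩

set_option linter.unusedSectionVars false
set_option linter.unusedVariables false

section PureCombinatorics

variable {ι : Type*} [Fintype ι]


lemma sum_eq_card_filter_one (x : ι → ℝ) (A : Finset ι)
    (h : ∀ i ∈ A, x i = 0 ∨ x i = 1) :
    ∑ i ∈ A, x i = (A.filter fun i => x i = 1).card := by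
  rw [← Finset.sum_filter_add_sum_filter_not A (fun i => x i = 1)]
  have h1 : ∑ i ∈ A.filter (fun i => x i = 1), x i
      = (A.filter fun i => x i = 1).card := by
    rw [Finset.sum_congr rfl (fun i hi => (Finset.mem_filter.mp hi).2)]
    simp
  have h2 : ∑ i ∈ A.filter (fun i => ¬ x i = 1), x i = 0 := by
    apply Finset.sum_eq_zero
    intro i hi
    rcases Finset.mem_filter.mp hi with ⟨hiA, hne⟩
    rcases h i hiA with h0 | h1
    · exact h0
    · exact absurd h1 hne
  rw [h1, h2, add_zero]

lemma Qlem (k : ℕ) : ∀ (x : ι → ℝ),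
    (Finset.univ.filter fun i => ¬(x i = 0 ∨ x i = 1)).card ≤ k →
    (∀ i, x i ∈ Set.Icc (0:ℝ) 1) → 2 ≤ ∑ i, (1 - x i) →
    x ∈ convexHull ℝ {y : ι → ℝ | (∀ i, y i = 0 ∨ y i = 1) ∧ 2 ≤ ∑ i, (1 - y i)} := by
  induction k with
  | zero =>
    intro x hc hb hs
    apply subset_convexHull
    refine ⟨fun i => ?_, hs⟩
    by_contra hi
    have hmem : i ∈ Finset.univ.filter fun i => ¬(x i = 0 ∨ x i = 1) :=
      Finset.mem_filter.mpr ⟨Finset.mem_univ i, hi⟩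
    have := Finset.card_pos.mpr ⟨i, hmem⟩
    omega
  | succ k ih =>
    intro x hc hb hs
    by_cases hall : ∀ i, x i = 0 ∨ x i = 1
    · exact subset_convexHull ℝ _ ⟨hall, hs⟩
    push_neg at hall
    obtain ⟨i, hi⟩ := hall
    have hifr : ¬(x i = 0 ∨ x i = 1) := by rw [not_or]; exact hi
    have hi0 : 0 < x i := lt_of_le_of_ne (hb i).1 (Ne.symm hi.1)
    have hi1 : x i < 1 := lt_of_le_of_ne (hb i).2 hi.2
    by_cases hj : ∃ j, j ≠ i ∧ ¬(x j = 0 ∨ x j = 1)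
    · -- two fractional coordinates: transfer mass between i and j
      obtain ⟨j, hji, hjf⟩ := hj
      have hj' : ¬ x j = 0 ∧ ¬ x j = 1 := by rw [← not_or]; exact hjf
      have hj0 : 0 < x j := lt_of_le_of_ne (hb j).1 (Ne.symm hj'.1)
      have hj1 : x j < 1 := lt_of_le_of_ne (hb j).2 hj'.2
      set c1 := min (1 - x i) (x j) with hc1
      set c2 := min (x i) (1 - x j) with hc2
      have hc1p : 0 < c1 := lt_min (by linarith) hj0
      have hc2p : 0 < c2 := lt_min hi0 (by linarith)
      have hc1a : c1 ≤ 1 - x i := min_le_left _ _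
      have hc1b : c1 ≤ x j := min_le_right _ _
      have hc2a : c2 ≤ x i := min_le_left _ _
      have hc2b : c2 ≤ 1 - x j := min_le_right _ _
      set a := fun z => if z = i then x i + c1 else if z = j then x j - c1 else x z with ha
      set b := fun z => if z = i then x i - c2 else if z = j then x j + c2 else x z with hbdef
      have hij : ¬ (i = j) := fun h => hji (h ▸ rfl)
      -- sums are preserved
      have hsuma : ∑ z, (1 - a z) = ∑ z, (1 - x z) := by
        have h1 : ∀ z, a z = x z + ((if z = i then c1 else 0) + (if z = j then -c1 else 0)) := by
          intro z
          by_cases h1 : z = i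
          · subst h1; simp [ha, hij]
          · by_cases h2 : z = j
            · subst h2; simp [ha, hij, h1]; ring
            · simp [ha, h1, h2]
        rw [Finset.sum_congr rfl (fun z _ => by rw [h1 z])]
        rw [Finset.sum_sub_distrib]
        rw [Finset.sum_sub_distrib (f := fun z => (1:ℝ))]
        congr 1
        rw [Finset.sum_add_distrib, Finset.sum_add_distrib,
          Finset.sum_ite_eq' Finset.univ i fun _ => c1,
          Finset.sum_ite_eq' Finset.univ j fun _ => -c1]
        simp
      have hsumb : ∑ z, (1 - b z) = ∑ z, (1 - x z) := by
        have h1 : ∀ z, b z = x z + ((if z = i then -c2 else 0) + (if z = j then c2 else 0)) := by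
          intro z
          by_cases h1 : z = i
          · subst h1; simp [hbdef, hij]; ring
          · by_cases h2 : z = j
            · subst h2; simp [hbdef, hij, h1]
            · simp [hbdef, h1, h2]
        rw [Finset.sum_congr rfl (fun z _ => by rw [h1 z])]
        rw [Finset.sum_sub_distrib]
        rw [Finset.sum_sub_distrib (f := fun z => (1:ℝ))]
        congr 1
        rw [Finset.sum_add_distrib, Finset.sum_add_distrib,
          Finset.sum_ite_eq' Finset.univ i fun _ => -c2,
          Finset.sum_ite_eq' Finset.univ j fun _ => c2]
        simp
      have hav : ∀ z, z ≠ i → z ≠ j → a z = x z := by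
        intro z hz1 hz2; simp [ha, hz1, hz2]
      have hai : a i = x i + c1 := by simp [ha]
      have haj : a j = x j - c1 := by simp [ha, hji]
      have hbv : ∀ z, z ≠ i → z ≠ j → b z = x z := by
        intro z hz1 hz2; simp [hbdef, hz1, hz2]
      have hbi : b i = x i - c2 := by simp [hbdef]
      have hbj : b j = x j + c2 := by simp [hbdef, hji]
      have hboxa : ∀ z, a z ∈ Set.Icc (0:ℝ) 1 := by
        intro z
        by_cases h1 : z = i
        · rw [h1, hai]; exact Set.mem_Icc.mpr ⟨by linarith, by linarith⟩
        · by_cases h2 : z = j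
          · rw [h2, haj]; exact Set.mem_Icc.mpr ⟨by linarith, by linarith [(hb j).2]⟩
          · rw [hav z h1 h2]; exact hb z
      have hboxb : ∀ z, b z ∈ Set.Icc (0:ℝ) 1 := by
        intro z
        by_cases h1 : z = i
        · rw [h1, hbi]; exact Set.mem_Icc.mpr ⟨by linarith, by linarith [(hb i).2]⟩
        · by_cases h2 : z = j
          · rw [h2, hbj]; exact Set.mem_Icc.mpr ⟨by linarith, by linarith⟩
          · rw [hbv z h1 h2]; exact hb z
      -- fewer fractional coordinates
      have hsubsa : (Finset.univ.filter fun z => ¬(a z = 0 ∨ a z = 1)) ⊂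
          (Finset.univ.filter fun z => ¬(x z = 0 ∨ x z = 1)) := by
        rw [Finset.ssubset_iff_of_subset]
        · rcases min_cases (1 - x i) (x j) with ⟨he, _⟩ | ⟨he, _⟩
          · refine ⟨i, Finset.mem_filter.mpr ⟨Finset.mem_univ i, hifr⟩, ?_⟩
            simp only [Finset.mem_filter]
            have hvv : a i = 1 := by rw [hai, hc1, he]; ring
            rw [hvv]; simp
          · refine ⟨j, Finset.mem_filter.mpr ⟨Finset.mem_univ j, hjf⟩, ?_⟩
            simp only [Finset.mem_filter]
            have hvv : a j = 0 := by rw [haj, hc1, he]; ring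
            rw [hvv]; simp
        · intro z hz
          rw [Finset.mem_filter] at hz ⊢
          refine ⟨Finset.mem_univ z, ?_⟩
          by_cases h1 : z = i
          · subst h1; exact hifr
          · by_cases h2 : z = j
            · subst h2; exact hjf
            · have : a z = x z := by simp [ha, h1, h2]
              rw [this] at hz; exact hz.2
      have hsubsb : (Finset.univ.filter fun z => ¬(b z = 0 ∨ b z = 1)) ⊂
          (Finset.univ.filter fun z => ¬(x z = 0 ∨ x z = 1)) := by
        rw [Finset.ssubset_iff_of_subset]
        · rcases min_cases (x i) (1 - x j) with ⟨he, _⟩ | ⟨he, _⟩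
          · refine ⟨i, Finset.mem_filter.mpr ⟨Finset.mem_univ i, hifr⟩, ?_⟩
            simp only [Finset.mem_filter]
            have hvv : b i = 0 := by rw [hbi, hc2, he]; ring
            rw [hvv]; simp
          · refine ⟨j, Finset.mem_filter.mpr ⟨Finset.mem_univ j, hjf⟩, ?_⟩
            simp only [Finset.mem_filter]
            have hvv : b j = 1 := by rw [hbj, hc2, he]; ring
            rw [hvv]; simp
        · intro z hz
          rw [Finset.mem_filter] at hz ⊢
          refine ⟨Finset.mem_univ z, ?_⟩
          by_cases h1 : z = i
          · subst h1; exact hifr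
          · by_cases h2 : z = j
            · subst h2; exact hjf
            · have : b z = x z := by simp [hbdef, h1, h2]
              rw [this] at hz; exact hz.2
      have hca : (Finset.univ.filter fun z => ¬(a z = 0 ∨ a z = 1)).card ≤ k := by
        have := Finset.card_lt_card hsubsa; omega
      have hcb : (Finset.univ.filter fun z => ¬(b z = 0 ∨ b z = 1)).card ≤ k := by
        have := Finset.card_lt_card hsubsb; omega
      have hma := ih a hca hboxa (by rw [hsuma]; exact hs)
      have hmb := ih b hcb hboxb (by rw [hsumb]; exact hs)
      have hcs : c1 + c2 ≠ 0 := by positivity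
      have hxab : x = (c2/(c1+c2)) • a + (c1/(c1+c2)) • b := by
        funext z
        simp only [Pi.add_apply, Pi.smul_apply, smul_eq_mul]
        by_cases h1 : z = i
        · rw [h1, hai, hbi]; field_simp; ring
        · by_cases h2 : z = j
          · rw [h2, haj, hbj]; field_simp; ring
          · rw [hav z h1 h2, hbv z h1 h2]; field_simp; ring
      rw [hxab]
      exact (convex_convexHull ℝ _) hma hmb
        (by positivity) (by positivity) (by field_simp; ring)
    · -- unique fractional coordinate
      push_neg at hj
      have hothers : ∀ z, z ≠ i → x z = 0 ∨ x z = 1 := fun z hz => by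
        by_contra h; exact (h (hj z hz))
      set S' := ∑ z ∈ Finset.univ.erase i, (1 - x z) with hS'
      have hsplit : S' + (1 - x i) = ∑ z, (1 - x z) :=
        Finset.sum_erase_add Finset.univ _ (Finset.mem_univ i)
      have hS'card : S' = ((Finset.univ.erase i).filter fun z => 1 - x z = 1).card := by
        apply sum_eq_card_filter_one
        intro z hz
        rcases hothers z (Finset.mem_erase.mp hz).1 with h0 | h1
        · right; rw [h0]; ring
        · left; rw [h1]; ring
      have hS'2 : 2 ≤ S' := by
        have h1 : (1:ℝ) < S' := by linarith
        rw [hS'card] at h1 ⊢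
        have : 1 < ((Finset.univ.erase i).filter fun z => 1 - x z = 1).card := by
          exact_mod_cast h1
        exact_mod_cast this
      set a := fun z => if z = i then (0:ℝ) else x z with ha
      set b := fun z => if z = i then (1:ℝ) else x z with hbdef
      have hsa : ∑ z, (1 - a z) = S' + 1 := by
        rw [← Finset.sum_erase_add Finset.univ _ (Finset.mem_univ i)]
        congr 1
        · apply Finset.sum_congr rfl
          intro z hz
          have : a z = x z := by simp [ha, (Finset.mem_erase.mp hz).1]
          rw [this]
        · simp [ha]
      have hsb : ∑ z, (1 - b z) = S' := by
        rw [← Finset.sum_erase_add Finset.univ _ (Finset.mem_univ i)]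
        have h2 : (1 : ℝ) - b i = 0 := by simp [hbdef]
        rw [h2, add_zero]
        apply Finset.sum_congr rfl
        intro z hz
        have : b z = x z := by simp [hbdef, (Finset.mem_erase.mp hz).1]
        rw [this]
      have hma : a ∈ convexHull ℝ {y : ι → ℝ | (∀ i, y i = 0 ∨ y i = 1) ∧ 2 ≤ ∑ i, (1 - y i)} := by
        apply subset_convexHull
        refine ⟨fun z => ?_, by rw [hsa]; linarith⟩
        by_cases h1 : z = i
        · subst h1; left; simp [ha]
        · simp only [ha, if_neg h1]; exact hothers z h1
      have hmb : b ∈ convexHull ℝ {y : ι → ℝ | (∀ i, y i = 0 ∨ y i = 1) ∧ 2 ≤ ∑ i, (1 - y i)} := by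
        apply subset_convexHull
        refine ⟨fun z => ?_, by rw [hsb]; linarith⟩
        by_cases h1 : z = i
        · subst h1; right; simp [hbdef]
        · simp only [hbdef, if_neg h1]; exact hothers z h1
      have hxab : x = (1 - x i) • a + (x i) • b := by
        funext z
        simp only [Pi.add_apply, Pi.smul_apply, smul_eq_mul]
        by_cases h1 : z = i
        · subst h1; simp [ha, hbdef]
        · simp only [ha, hbdef, if_neg h1]; ring
      rw [hxab]
      exact (convex_convexHull ℝ _) hma hmb (by linarith) (by linarith) (by ring)

lemma cone_lem (x : ι → ℝ) (hb : ∀ i, x i ∈ Set.Icc (0:ℝ) 1)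
    (hcon : ∀ e, 2*(1 - x e) ≤ ∑ i, (1 - x i)) :
    x ∈ convexHull ℝ {y : ι → ℝ | (∀ i, y i = 0 ∨ y i = 1) ∧
      (Finset.univ.filter fun i => y i = 0).card ≠ 1} := by
  set F : Set (ι → ℝ) := {y : ι → ℝ | (∀ i, y i = 0 ∨ y i = 1) ∧
      (Finset.univ.filter fun i => y i = 0).card ≠ 1} with hF
  have hTF : {y : ι → ℝ | (∀ i, y i = 0 ∨ y i = 1) ∧ 2 ≤ ∑ i, (1 - y i)} ⊆ F := by
    rintro y ⟨hbin, hsum⟩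
    refine ⟨hbin, ?_⟩
    have hcnt : ∑ i, (1 - y i) = ((Finset.univ.filter fun i => (1:ℝ) - y i = 1).card : ℝ) :=
      sum_eq_card_filter_one _ _ (fun i _ => by rcases hbin i with h | h <;> rw [h] <;> simp)
    have hfe : (Finset.univ.filter fun i => (1:ℝ) - y i = 1)
        = (Finset.univ.filter fun i => y i = 0) := by
      apply Finset.filter_congr
      intro i _
      constructor
      · intro h; linarith
      · intro h; rw [h]; ring
    rw [hcnt, hfe] at hsum
    have : 2 ≤ (Finset.univ.filter fun i => y i = 0).card := by exact_mod_cast hsum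
    omega
  set σ := ∑ i, (1 - x i) with hσdef
  by_cases hσ : σ ≤ 0
  · apply subset_convexHull
    have hall : ∀ i, x i = 1 := by
      have hz : σ = 0 := le_antisymm hσ (Finset.sum_nonneg fun i _ => by linarith [(hb i).2])
      intro i
      have := (Finset.sum_eq_zero_iff_of_nonneg
        (fun i _ => by linarith [(hb i).2] : ∀ i ∈ Finset.univ, 0 ≤ 1 - x i)).mp hz i
        (Finset.mem_univ i)
      linarith
    refine ⟨fun i => Or.inr (hall i), ?_⟩
    have : (Finset.univ.filter fun i => x i = 0) = ∅ := by
      apply Finset.filter_false_of_mem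
      intro i _
      rw [hall i]; norm_num
    rw [this]; simp
  · push_neg at hσ
    set t := min 1 (σ/2) with htdef
    have ht0 : 0 < t := lt_min one_pos (by linarith)
    have ht1 : t ≤ 1 := min_le_left _ _
    have ht2 : t ≤ σ/2 := min_le_right _ _
    set q := fun i => 1 - (1 - x i)/t with hq
    have hqv : ∀ i, 1 - q i = (1 - x i)/t := fun i => by simp [hq]
    have hqbox : ∀ i, q i ∈ Set.Icc (0:ℝ) 1 := by
      intro i
      constructor
      · have h1 : 1 - x i ≤ t := le_min (by linarith [(hb i).1]) (by linarith [hcon i])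
        have := div_le_one_of_le₀ h1 (le_of_lt ht0)
        simp only [hq]
        linarith
      · simp only [hq]
        have : 0 ≤ (1 - x i)/t := div_nonneg (by linarith [(hb i).2]) (le_of_lt ht0)
        linarith
    have hqsum : 2 ≤ ∑ i, (1 - q i) := by
      have : ∑ i, (1 - q i) = σ / t := by
        rw [Finset.sum_congr rfl (fun i _ => hqv i), hσdef, Finset.sum_div]
      rw [this, le_div_iff₀ ht0]
      linarith
    have hqmem : q ∈ convexHull ℝ F := by
      apply convexHull_mono hTF
      exact Qlem (Finset.univ.card)
        q (Finset.card_filter_le _ _) hqbox hqsum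
    have honemem : (fun _ : ι => (1:ℝ)) ∈ convexHull ℝ F := by
      apply subset_convexHull
      refine ⟨fun i => Or.inr rfl, ?_⟩
      have : (Finset.univ.filter fun _ : ι => (1:ℝ) = 0) = ∅ := by
        apply Finset.filter_false_of_mem
        intro i _
        norm_num
      rw [this]; simp
    have hxq : x = t • q + (1-t) • (fun _ : ι => (1:ℝ)) := by
      funext i
      simp only [Pi.add_apply, Pi.smul_apply, smul_eq_mul, hq]
      field_simp
      ring
    rw [hxq]
    exact (convex_convexHull ℝ F) hqmem honemem (le_of_lt ht0) (by linarith) (by ring)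

end PureCombinatorics

section Graph

variable (n : ℕ) [NeZero n]

lemma val_add_one (hn : 3 ≤ n) (i : Fin n) : ((i + 1 : Fin n)).val = (i.val + 1) % n := by
  rw [Fin.add_def, Fin.val_one']
  show (i.val + 1 % n) % n = (i.val + 1) % n
  have h1 : 1 % n = 1 := Nat.mod_eq_of_lt (by omega)
  rw [h1]

lemma fin_add_one_ne (hn : 3 ≤ n) (i : Fin n) : i ≠ i + 1 := by
  intro h
  have h1 := val_add_one n hn i
  rw [← h] at h1
  have hlt := i.isLt
  rcases Nat.lt_or_ge (i.val + 1) n with h2 | h2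
  · rw [Nat.mod_eq_of_lt h2] at h1; omega
  · have : i.val + 1 = n := by omega
    rw [this, Nat.mod_self] at h1; omega

lemma cyc_adj (hn : 3 ≤ n) (i : Fin n) : (cycleG n).Adj i (i + 1) :=
  (show i ≠ i + 1 ∧ (i + 1 = i + 1 ∨ i = i + 1 + 1) from ⟨fin_add_one_ne n hn i, Or.inl rfl⟩)

def fE (hn : 3 ≤ n) (i : Fin n) : (cycleG n).edgeSet :=
  ⟨s(i, i + 1), (SimpleGraph.mem_edgeSet _).mpr (cyc_adj n hn i)⟩

lemma fE_injective (hn : 3 ≤ n) : Function.Injective (fE n hn) := by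
  intro i j h
  have h2 : s(i, i + 1) = s(j, j + 1) := congrArg Subtype.val h
  rw [Sym2.eq_iff] at h2
  rcases h2 with ⟨h3, _⟩ | ⟨h3, h4⟩
  · exact h3
  · -- i = j + 1 and i + 1 = j : then i = i + 2, contradiction
    exfalso
    have h5 : i = i + 1 + 1 := by rw [← h4] at h3; exact h3
    have hv : i.val = ((i + 1 : Fin n) + 1).val := by rw [← h5]
    rw [val_add_one n hn (i+1), val_add_one n hn i] at hv
    have hlt := i.isLt
    rcases Nat.lt_or_ge (i.val + 1) n with h6 | h6
    · rw [Nat.mod_eq_of_lt h6] at hv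
      rcases Nat.lt_or_ge (i.val + 2) n with h7 | h7
      · rw [Nat.mod_eq_of_lt h7] at hv; omega
      · have : i.val + 1 + 1 = n ∨ i.val + 1 + 1 = n + 1 := by omega
        rcases this with h8 | h8
        · rw [h8, Nat.mod_self] at hv; omega
        · have h9 : (i.val + 1 + 1) % n = 1 := by
            rw [h8, Nat.add_mod_left n 1, Nat.mod_eq_of_lt (by omega)]
          rw [h9] at hv; omega
    · have h8 : i.val + 1 = n := by omega
      rw [h8, Nat.mod_self] at hv
      have h9 : (0 + 1) % n = 1 := by rw [Nat.mod_eq_of_lt (by omega)]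
      rw [h9] at hv; omega

lemma fE_surjective (hn : 3 ≤ n) : Function.Surjective (fE n hn) := by
  rintro ⟨e, he⟩
  induction e using Sym2.ind with
  | _ v w =>
    rw [SimpleGraph.mem_edgeSet] at he
    rcases (show v ≠ w ∧ (w = v + 1 ∨ v = w + 1) from he).2 with h1 | h1
    · exact ⟨v, Subtype.ext (show s(v, v + 1) = s(v, w) from by rw [h1])⟩
    · exact ⟨w, Subtype.ext (show s(w, w + 1) = s(v, w) from by rw [h1]; exact Sym2.eq_swap)⟩

lemma card_edgeSet (hn : 3 ≤ n) : Fintype.card (cycleG n).edgeSet = n := by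
  have h := Fintype.card_of_bijective (⟨fE_injective n hn, fE_surjective n hn⟩ :
    Function.Bijective (fE n hn))
  rw [Fintype.card_fin] at h
  exact h.symm

end Graph

section Graph2

lemma zmod_one_ne_zero {m : ℕ} (h : 2 ≤ m) : (1 : ZMod m) ≠ 0 := by
  haveI : NeZero m := ⟨by omega⟩
  intro hh
  have h1 : (1 : ZMod m).val = 1 := by
    rw [ZMod.val_one_eq_one_mod, Nat.mod_eq_of_lt (by omega)]
  rw [hh, ZMod.val_zero] at h1
  omega

variable (n : ℕ) [NeZero n]

lemma realizable_of (hn : 3 ≤ n) (x : (cycleG n).edgeSet → ℝ)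
    (hbin : ∀ e, x e = 0 ∨ x e = 1)
    (hzc : (Finset.univ.filter fun e => x e = 0).card ≠ 1) :
    RealizablePoint (cycleG n) x := by
  set m := (Finset.univ.filter fun e => x e = 0).card with hm
  set c : ℕ → ℕ := fun k => if h : k < n then (if x (fE n hn ⟨k, h⟩) = 0 then 1 else 0) else 0
    with hcdef
  set lam : Fin n → ZMod m := fun i => ((∑ k ∈ Finset.range i.val, c k : ℕ) : ZMod m) with hlam
  have hcv : ∀ i : Fin n, c i.val = if x (fE n hn i) = 0 then 1 else 0 := by
    intro i
    rw [hcdef]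
    simp only [dif_pos i.isLt, Fin.eta]
  have hm2 : ∀ e, x e = 0 → 2 ≤ m := by
    intro e he
    have h1 : e ∈ Finset.univ.filter fun e => x e = 0 :=
      Finset.mem_filter.mpr ⟨Finset.mem_univ e, he⟩
    have := Finset.card_pos.mpr ⟨e, h1⟩
    omega
  have htot : ∑ k ∈ Finset.range n, c k = m := by
    rw [← Fin.sum_univ_eq_sum_range]
    rw [Finset.sum_congr rfl (fun i _ => hcv i)]
    rw [← Finset.card_filter]
    apply Finset.card_bij (fun i _ => fE n hn i)
    · intro i hi
      rw [Finset.mem_filter] at hi ⊢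
      exact ⟨Finset.mem_univ _, hi.2⟩
    · intro i _ j _ h
      exact fE_injective n hn h
    · intro e he
      obtain ⟨i, rfl⟩ := fE_surjective n hn e
      rw [Finset.mem_filter] at he
      exact ⟨i, Finset.mem_filter.mpr ⟨Finset.mem_univ _, he.2⟩, rfl⟩
  have key : ∀ v : Fin n, x (fE n hn v) = if lam v = lam (v + 1) then 1 else 0 := by
    intro v
    rcases Nat.lt_or_ge (v.val + 1) n with hvn | hvn
    · -- no wraparound
      have hval : ((v + 1 : Fin n)).val = v.val + 1 := by
        rw [val_add_one n hn v, Nat.mod_eq_of_lt hvn]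
      have hstep : lam (v + 1) = lam v + ((c v.val : ℕ) : ZMod m) := by
        rw [hlam]
        simp only [hval]
        rw [Finset.sum_range_succ, Nat.cast_add]
      rcases hbin (fE n hn v) with h0 | h1
      · -- zero edge
        rw [h0]
        rw [if_neg]
        rw [hstep, hcv, if_pos h0]
        intro hcontra
        rw [Nat.cast_one] at hcontra
        exact zmod_one_ne_zero (hm2 _ h0) ((left_eq_add).mp hcontra)
      · rw [h1, if_pos]
        rw [hstep, hcv, if_neg (by rw [h1]; norm_num), Nat.cast_zero, add_zero]
    · -- wraparound: v.val + 1 = n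
      have hvn' : v.val + 1 = n := by have := v.isLt; omega
      have hval0 : ((v + 1 : Fin n)).val = 0 := by
        rw [val_add_one n hn v, hvn', Nat.mod_self]
      have hlam1 : lam (v + 1) = 0 := by
        rw [hlam]
        simp only [hval0, Finset.range_zero, Finset.sum_empty, Nat.cast_zero]
      have hsum : lam v + ((c v.val : ℕ) : ZMod m) = 0 := by
        rw [hlam]
        simp only []
        rw [← Nat.cast_add, ← Finset.sum_range_succ, hvn', htot, ZMod.natCast_self]
      rcases hbin (fE n hn v) with h0 | h1
      · rw [h0, hlam1, if_neg]
        intro hcontra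
        rw [hcontra] at hsum
        rw [hcv, if_pos h0, Nat.cast_one, zero_add] at hsum
        exact zmod_one_ne_zero (hm2 _ h0) hsum
      · rw [h1, hlam1, if_pos]
        rw [hcv, if_neg (by rw [h1]; norm_num), Nat.cast_zero, add_zero] at hsum
        exact hsum
  have hite : ∀ (p : Prop) (i1 i2 : Decidable p), @ite ℝ p i1 1 0 = @ite ℝ p i2 1 0 := by
    intro p i1 i2
    by_cases hp : p
    · rw [if_pos hp, if_pos hp]
    · rw [if_neg hp, if_neg hp]
  refine ⟨ZMod m, lam, ?_⟩
  intro v w h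
  rcases (show v ≠ w ∧ (w = v + 1 ∨ v = w + 1) from h).2 with hw | hv
  · have heq : edgeMk (cycleG n) h = fE n hn v :=
      Subtype.ext (show s(v, w) = s(v, v + 1) from by rw [hw])
    rw [heq, key v, hw]
    exact hite _ _ _
  · have heq : edgeMk (cycleG n) h = fE n hn w :=
      Subtype.ext (show s(v, w) = s(w, w + 1) from by rw [hv]; exact Sym2.eq_swap)
    rw [heq, key w, hv]
    by_cases hc : lam w = lam (w + 1)
    · rw [if_pos hc, if_pos hc.symm]
    · rw [if_neg hc, if_neg (fun hh => hc hh.symm)]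

end Graph2

section Graph1

variable (n : ℕ) [NeZero n]
open Fin.NatCast Fin.CommRing

lemma bin_of_realizable (hn : 3 ≤ n) (x : (cycleG n).edgeSet → ℝ)
    (hr : RealizablePoint (cycleG n) x) : ∀ e, x e = 0 ∨ x e = 1 := by
  obtain ⟨Λ, lam, hc⟩ := hr
  intro e
  obtain ⟨v, rfl⟩ := fE_surjective n hn e
  have heq : edgeMk (cycleG n) (cyc_adj n hn v) = fE n hn v := rfl
  have := hc v (v + 1) (cyc_adj n hn v)
  rw [heq] at this
  rw [this]
  by_cases hl : lam v = lam (v + 1)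
  · right; rw [if_pos hl]
  · left; rw [if_neg hl]

lemma zc_ne_one_of_realizable (hn : 3 ≤ n) (x : (cycleG n).edgeSet → ℝ)
    (hr : RealizablePoint (cycleG n) x) :
    (Finset.univ.filter fun e => x e = 0).card ≠ 1 := by
  intro h1
  obtain ⟨Λ, lam, hc⟩ := hr
  have hval : ∀ v : Fin n, x (fE n hn v) = if lam v = lam (v + 1) then 1 else 0 := by
    intro v
    exact hc v (v + 1) (cyc_adj n hn v)
  have hone : ∀ v : Fin n, x (fE n hn v) ≠ 0 → lam v = lam (v + 1) := by
    intro v hv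
    by_contra hl
    rw [hval v, if_neg hl] at hv
    exact hv rfl
  obtain ⟨e₀, he₀⟩ := Finset.card_eq_one.mp h1
  have hx₀ : x e₀ = 0 := by
    have : e₀ ∈ Finset.univ.filter fun e => x e = 0 := he₀ ▸ Finset.mem_singleton_self e₀
    exact (Finset.mem_filter.mp this).2
  obtain ⟨i₀, rfl⟩ := fE_surjective n hn e₀
  have honly : ∀ v : Fin n, v ≠ i₀ → x (fE n hn v) ≠ 0 := by
    intro v hv hx
    have : fE n hn v ∈ Finset.univ.filter fun e => x e = 0 :=
      Finset.mem_filter.mpr ⟨Finset.mem_univ _, hx⟩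
    rw [he₀, Finset.mem_singleton] at this
    exact hv (fE_injective n hn this)
  have hne₀ : lam i₀ ≠ lam (i₀ + 1) := by
    intro hl
    rw [hval i₀, if_pos hl] at hx₀
    norm_num at hx₀
  -- chain around the cycle
  have chain : ∀ k : ℕ, k + 1 ≤ n - 1 →
      lam (i₀ + ((k + 1 : ℕ) : Fin n)) = lam (i₀ + 1) := by
    intro k
    induction k with
    | zero => intro _; norm_num
    | succ k ih =>
      intro hk
      have ih' := ih (by omega)
      set u := i₀ + ((k + 1 : ℕ) : Fin n) with hu
      have hu_ne : u ≠ i₀ := by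
        intro h
        have h2 : ((k + 1 : ℕ) : Fin n) = 0 := by
          have hh : i₀ + ((k + 1 : ℕ) : Fin n) = i₀ + 0 := by rw [add_zero, ← hu, h]
          exact add_left_cancel hh
        have h3 : ((k + 1 : ℕ) : Fin n).val = 0 := by rw [h2]; rfl
        rw [Fin.val_natCast, Nat.mod_eq_of_lt (by omega)] at h3
        omega
      have hstep : lam u = lam (u + 1) := hone u (honly u hu_ne)
      have hu1 : u + 1 = i₀ + ((k + 2 : ℕ) : Fin n) := by
        rw [hu]
        have : ((k + 2 : ℕ) : Fin n) = ((k + 1 : ℕ) : Fin n) + 1 := by push_cast; ring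
        rw [this, add_assoc]
      rw [show (k + 1 + 1 : ℕ) = k + 2 from rfl, ← hu1, ← hstep, ih']
  -- close the cycle
  have hlast : lam (i₀ + ((n - 1 : ℕ) : Fin n)) = lam (i₀ + 1) := by
    have : (n - 1 - 1) + 1 = n - 1 := by omega
    have h2 := chain (n - 1 - 1) (by omega)
    rw [this] at h2
    exact h2
  set u := i₀ + ((n - 1 : ℕ) : Fin n) with hu
  have hu_ne : u ≠ i₀ := by
    intro h
    have h2 : ((n - 1 : ℕ) : Fin n) = 0 := by
      have hh : i₀ + ((n - 1 : ℕ) : Fin n) = i₀ + 0 := by rw [add_zero, ← hu, h]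
      exact add_left_cancel hh
    have h3 : ((n - 1 : ℕ) : Fin n).val = 0 := by rw [h2]; rfl
    rw [Fin.val_natCast, Nat.mod_eq_of_lt (by omega)] at h3
    omega
  have hstep : lam u = lam (u + 1) := hone u (honly u hu_ne)
  have hu1 : u + 1 = i₀ := by
    rw [hu, add_assoc]
    have : ((n - 1 : ℕ) : Fin n) + 1 = 0 := by
      have h4 : ((n - 1 : ℕ) : Fin n) + 1 = ((n : ℕ) : Fin n) := by
        rw [← Nat.cast_one (R := Fin n), ← Nat.cast_add,
          show n - 1 + 1 = n from by omega]
      rw [h4]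
      exact Fin.natCast_self n
    rw [this, add_zero]
  rw [hu1] at hstep
  exact hne₀ (by rw [← hstep]; exact hlast)

end Graph1


/-- The classical polytope of the `n`-cycle (`n ≥ 3`) is exactly the subset of the unit
hypercube cut out by the `n` cycle inequalities `−r_e + Σ_{e' ≠ e} r_{e'} ≤ n − 2`. -/
theorem stmt15 (n : ℕ) [NeZero n] (hn : 3 ≤ n) (r : (cycleG n).edgeSet → ℝ) :
    r ∈ classicalPolytope (cycleG n) ↔
      ((∀ e, r e ∈ Set.Icc (0 : ℝ) 1) ∧
       ∀ e : (cycleG n).edgeSet,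
         - r e + ∑ e' ∈ Finset.univ.erase e, r e' ≤ (n : ℝ) - 2) := by
  have hN : Fintype.card (cycleG n).edgeSet = n := card_edgeSet n hn
  constructor
  · intro hr
    suffices hsub : classicalPolytope (cycleG n) ⊆ {x : (cycleG n).edgeSet → ℝ |
        (∀ e, x e ∈ Set.Icc (0:ℝ) 1) ∧
        ∀ e, - x e + ∑ e' ∈ Finset.univ.erase e, x e' ≤ (n:ℝ) - 2} from hsub hr
    apply convexHull_min
    · rintro x hx
      have hbin := bin_of_realizable n hn x hx
      have hzc := zc_ne_one_of_realizable n hn x hx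
      constructor
      · intro e; rcases hbin e with h | h <;> rw [h] <;> constructor <;> norm_num
      · intro e
        set z := (Finset.univ.filter fun e' => x e' = 0).card with hz
        have hsum_all : ∑ e', x e' = (n:ℝ) - z := by
          rw [sum_eq_card_filter_one x Finset.univ (fun i _ => hbin i)]
          have hpart := Finset.card_filter_add_card_filter_not
            (s := Finset.univ) (p := fun e' => x e' = 1)
          have hfe : (Finset.univ.filter fun e' => ¬ x e' = 1)
              = (Finset.univ.filter fun e' => x e' = 0) := by
            apply Finset.filter_congr
            intro e' _
            rcases hbin e' with h | h <;> simp [h]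
          rw [hfe, Finset.card_univ, hN] at hpart
          have : (Finset.univ.filter fun e' => x e' = 1).card = n - z := by omega
          rw [this]
          have hzn : z ≤ n := by omega
          push_cast [hzn]
          ring
        have herase : ∑ e' ∈ Finset.univ.erase e, x e' = (∑ e', x e') - x e := by
          rw [← Finset.sum_erase_add Finset.univ x (Finset.mem_univ e)]; ring
        rcases hbin e with h | h
        · have hz2 : 2 ≤ z := by
            have h1 : e ∈ Finset.univ.filter fun e' => x e' = 0 :=
              Finset.mem_filter.mpr ⟨Finset.mem_univ e, h⟩
            have := Finset.card_pos.mpr ⟨e, h1⟩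
            omega
          have hz2' : (2:ℝ) ≤ z := by exact_mod_cast hz2
          rw [herase, hsum_all, h]
          linarith
        · have hz0 : (0:ℝ) ≤ z := Nat.cast_nonneg z
          rw [herase, hsum_all, h]
          linarith
    · -- convexity of the constraint set
      have hset : {x : (cycleG n).edgeSet → ℝ |
          (∀ e, x e ∈ Set.Icc (0:ℝ) 1) ∧
          ∀ e, - x e + ∑ e' ∈ Finset.univ.erase e, x e' ≤ (n:ℝ) - 2}
        = ((⋂ e, {x : (cycleG n).edgeSet → ℝ | 0 ≤ x e}) ∩
           (⋂ e, {x : (cycleG n).edgeSet → ℝ | x e ≤ 1})) ∩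
          (⋂ e, {x : (cycleG n).edgeSet → ℝ |
            - x e + ∑ e' ∈ Finset.univ.erase e, x e' ≤ (n:ℝ) - 2}) := by
        ext x
        simp only [Set.mem_setOf_eq, Set.mem_inter_iff, Set.mem_iInter, Set.mem_Icc,
          forall_and]
      rw [hset]
      apply Convex.inter
      · apply Convex.inter
        · exact convex_iInter fun e =>
            convex_halfSpace_ge ⟨fun a b => rfl, fun c a => rfl⟩ 0
        · exact convex_iInter fun e =>
            convex_halfSpace_le ⟨fun a b => rfl, fun c a => rfl⟩ 1
      · refine convex_iInter fun e => ?_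
        apply convex_halfSpace_le
        constructor
        · intro a b
          simp only [Pi.add_apply]
          rw [Finset.sum_add_distrib]
          ring
        · intro c a
          simp only [Pi.smul_apply, smul_eq_mul]
          rw [← Finset.mul_sum]
          ring
  · rintro ⟨hbox, hineq⟩
    have hcon : ∀ e, 2*(1 - r e) ≤ ∑ i, (1 - r i) := by
      intro e
      have h1 := hineq e
      have herase : ∑ e' ∈ Finset.univ.erase e, r e' = (∑ e', r e') - r e := by
        rw [← Finset.sum_erase_add Finset.univ r (Finset.mem_univ e)]; ring
      have hsum1 : ∑ i, (1 - r i) = (n:ℝ) - ∑ i, r i := by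
        rw [Finset.sum_sub_distrib, Finset.sum_const, Finset.card_univ, hN]
        simp
      rw [herase] at h1
      rw [hsum1]
      linarith
    have hmem := cone_lem r hbox hcon
    refine convexHull_mono ?_ hmem
    rintro y ⟨hbin, hzc⟩
    exact realizable_of n hn y hbin hzc
end

section
/- Let W₆ be the 6-vertex wheel graph: vertices 1, …, 5 forming a 5-cycle (edges {1,2}, {2,3}, {3,4}, {4,5}, {1,5}) plus a central vertex 6 adjacent to each of 1, …, 5. Then every edge weighting r in the classical polytope C_{W₆} satisfies −r_{12} − r_{23} − r_{34} − r_{45} − r_{15} + r_{16} + r_{26} + r_{36} + r_{46} + r_{56} ≤ 2. In particular, any edge weighting of W₆ with r_{12} = r_{23} = r_{34} = r_{45} = r_{15} = 0 (the KCBS exclusivity constraints) that lies in C_{W₆} satisfies r_{16} + r_{26} + r_{36} + r_{46} + r_{56} ≤ 2. -/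
open SimpleGraph
open scoped Classical

variable {V : Type*}

/-- The 6-vertex wheel graph `W₆`: an outer 5-cycle on vertices `0, …, 4` (the paper's
`1, …, 5`), plus a central vertex `5` (the paper's `6`) adjacent to each outer vertex. -/
def W6 : SimpleGraph (Fin 6) :=
  SimpleGraph.fromEdgeSet
    {s((0 : Fin 6), 1), s((1 : Fin 6), 2), s((2 : Fin 6), 3), s((3 : Fin 6), 4),
     s((0 : Fin 6), 4),
     s((0 : Fin 6), 5), s((1 : Fin 6), 5), s((2 : Fin 6), 5), s((3 : Fin 6), 5),
     s((4 : Fin 6), 5)}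

/-- The weight an edge weighting `r` of `W₆` assigns to the edge `{i,j}`
(and `0` if `{i,j}` is not an edge of `W₆`). -/
noncomputable def wv (r : W6.edgeSet → ℝ) (i j : Fin 6) : ℝ :=
  if h : W6.Adj i j then r (edgeMk W6 h) else 0

lemma a01 : W6.Adj 0 1 := by simp [W6]
lemma a12 : W6.Adj 1 2 := by simp [W6]
lemma a23 : W6.Adj 2 3 := by simp [W6]
lemma a34 : W6.Adj 3 4 := by simp [W6]
lemma a04 : W6.Adj 0 4 := by simp [W6]
lemma a05 : W6.Adj 0 5 := by simp [W6]
lemma a15 : W6.Adj 1 5 := by simp [W6]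
lemma a25 : W6.Adj 2 5 := by simp [W6]
lemma a35 : W6.Adj 3 5 := by simp [W6]
lemma a45 : W6.Adj 4 5 := by simp [W6]

lemma wv_eq (r : W6.edgeSet → ℝ) {i j : Fin 6} (h : W6.Adj i j) :
    wv r i j = r (edgeMk W6 h) := dif_pos h

/-- Every edge weighting `r` in the classical polytope `C_{W₆}` satisfies
`−r_{12} − r_{23} − r_{34} − r_{45} − r_{15} + r_{16} + r_{26} + r_{36} + r_{46} + r_{56} ≤ 2`;
in particular, if moreover `r_{12} = r_{23} = r_{34} = r_{45} = r_{15} = 0` (the KCBS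
exclusivity constraints), then `r_{16} + r_{26} + r_{36} + r_{46} + r_{56} ≤ 2`. -/
theorem stmt19 (r : W6.edgeSet → ℝ) (hr : r ∈ classicalPolytope W6) :
    (- wv r 0 1 - wv r 1 2 - wv r 2 3 - wv r 3 4 - wv r 0 4
      + wv r 0 5 + wv r 1 5 + wv r 2 5 + wv r 3 5 + wv r 4 5 ≤ 2) ∧
    ((wv r 0 1 = 0 ∧ wv r 1 2 = 0 ∧ wv r 2 3 = 0 ∧ wv r 3 4 = 0 ∧ wv r 0 4 = 0) →
      wv r 0 5 + wv r 1 5 + wv r 2 5 + wv r 3 5 + wv r 4 5 ≤ 2) := by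
  have hsub : classicalPolytope W6 ⊆
      {x : W6.edgeSet → ℝ |
        - x (edgeMk W6 a01) - x (edgeMk W6 a12) - x (edgeMk W6 a23)
          - x (edgeMk W6 a34) - x (edgeMk W6 a04)
          + x (edgeMk W6 a05) + x (edgeMk W6 a15) + x (edgeMk W6 a25)
          + x (edgeMk W6 a35) + x (edgeMk W6 a45) ≤ 2} := by
    apply convexHull_min
    · rintro x ⟨Λ, lam, hx⟩
      simp only [Set.mem_setOf_eq, hx _ _ a01, hx _ _ a12, hx _ _ a23, hx _ _ a34,
        hx _ _ a04, hx _ _ a05, hx _ _ a15, hx _ _ a25, hx _ _ a35, hx _ _ a45]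
      by_cases h0 : lam 0 = lam 5 <;> by_cases h1 : lam 1 = lam 5 <;>
        by_cases h2 : lam 2 = lam 5 <;> by_cases h3 : lam 3 = lam 5 <;>
        by_cases h4 : lam 4 = lam 5 <;>
        simp only [h0, h1, h2, h3, h4, if_true, if_false, eq_self_iff_true, if_neg] <;>
        (try split_ifs) <;> norm_num
    · have hl : IsLinearMap ℝ (fun x : W6.edgeSet → ℝ =>
        - x (edgeMk W6 a01) - x (edgeMk W6 a12) - x (edgeMk W6 a23)
          - x (edgeMk W6 a34) - x (edgeMk W6 a04)
          + x (edgeMk W6 a05) + x (edgeMk W6 a15) + x (edgeMk W6 a25)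
          + x (edgeMk W6 a35) + x (edgeMk W6 a45)) := by
        constructor <;> intros <;> simp [Pi.add_apply, Pi.smul_apply] <;> ring
      exact convex_halfSpace_le hl 2
  have h := hsub hr
  simp only [Set.mem_setOf_eq] at h
  rw [wv_eq r a01, wv_eq r a12, wv_eq r a23, wv_eq r a34, wv_eq r a04,
    wv_eq r a05, wv_eq r a15, wv_eq r a25, wv_eq r a35, wv_eq r a45]
  refine ⟨h, ?_⟩
  rintro ⟨e1, e2, e3, e4, e5⟩
  linarith
end
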